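/- arXiv:2402.07740 — 7 statements merged into one kernel-verified Lean document; each statement's English description precedes it below -/
import Mathlib

section
/- The function G defined by the Weierstrass product satisfies the functional equation G(x+1) = Γ(x)·G(x) for every real x > 0. -/
open Real

/-- The double gamma function, defined by its Weierstrass product. -/
noncomputable def doubleGamma (x : ℝ) : ℝ :=
  (2 * π) ^ ((x - 1) / 2) *
    Real.exp (-(x - 1) * x / 2 - Real.eulerMascheroniConstant * (x - 1) ^ 2 / 2) *
    ∏' n : ℕ,
      ((1 + (x - 1) / (n + 1)) ^ (n + 1) *
        Real.exp (-(x - 1) + (x - 1) ^ 2 / (2 * (n + 1))))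

open Filter Topology Finset


noncomputable def dgG (t : ℝ) (n : ℕ) : ℝ :=
  (n + 1) * Real.log (1 + t / (n + 1)) - t + t ^ 2 / (2 * (n + 1))

lemma dg_base_pos (t : ℝ) (ht : -1 < t) (n : ℕ) : (0:ℝ) < 1 + t / (n + 1) := by
  have h0 : (0:ℝ) ≤ (n:ℝ) := Nat.cast_nonneg n
  have h1 : (1:ℝ) ≤ (n:ℝ) + 1 := by linarith
  rcases le_or_gt 0 t with h | h
  · positivity
  · have : -1 < t / (n + 1) := by
      rw [neg_lt, ← neg_div]
      calc -t / (n+1) ≤ -t / 1 :=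
            div_le_div_of_nonneg_left (by linarith) one_pos h1
        _ = -t := by ring
        _ < 1 := by linarith
    linarith

lemma dg_factor_eq (t : ℝ) (ht : -1 < t) (n : ℕ) :
    (1 + t / (n + 1)) ^ (n + 1) * Real.exp (-t + t ^ 2 / (2 * (n + 1))) =
      Real.exp (dgG t n) := by
  have hpos := dg_base_pos t ht n
  have hc : ((n:ℝ) + 1) * log (1 + t / (n + 1)) = ((n+1 : ℕ):ℝ) * log (1 + t / (n+1)) := by
    push_cast; ring
  rw [dgG, sub_add, Real.exp_sub, hc, Real.exp_nat_mul, Real.exp_log hpos,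
    eq_div_iff (Real.exp_ne_zero _), mul_assoc, ← Real.exp_add]
  rw [show -t + t ^ 2 / (2 * ((n:ℝ) + 1)) + (t - t ^ 2 / (2 * ((n:ℝ) + 1))) = 0 by ring,
    Real.exp_zero, mul_one]

lemma dgG_summable (t : ℝ) : Summable (dgG t) := by
  have hsum : Summable (fun n : ℕ => 2 * |t| ^ 3 / ((n:ℝ) + 1) ^ 2) := by
    have h : Summable (fun n : ℕ => (((n:ℝ) + 1) ^ 2)⁻¹) := by
      have h0 : Summable (fun n : ℕ => 1 / (n:ℝ) ^ 2) :=
        Real.summable_one_div_nat_pow.mpr (by norm_num)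
      have := (summable_nat_add_iff 1).mpr h0
      simpa [one_div] using this
    have := h.mul_left (2 * |t| ^ 3)
    simpa [div_eq_mul_inv] using this
  apply Summable.of_norm_bounded_eventually_nat hsum
  filter_upwards [eventually_ge_atTop (Nat.ceil (2 * |t|))] with n hn
  have hu : |t / ((n:ℝ) + 1)| ≤ 1 / 2 := by
    rw [abs_div, abs_of_pos (show (0:ℝ) < (n:ℝ)+1 by positivity), div_le_div_iff₀ (by positivity) two_pos]
    have : (2 * |t| : ℝ) ≤ n := le_trans (Nat.le_ceil _) (by exact_mod_cast hn)
    linarith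
  set u := t / ((n:ℝ) + 1) with hu_def
  have key := Real.abs_log_sub_add_sum_range_le (x := -u) (by rw [abs_neg]; linarith [abs_nonneg u, hu]) 2
  have hs : ∑ i ∈ range 2, (-u) ^ (i+1) / (i+1) = -u + u^2/2 := by
    simp [Finset.sum_range_succ]
    ring
  rw [hs] at key
  have hident : dgG t n = ((n:ℝ)+1) * (-u + u^2/2 + Real.log (1 - -u)) := by
    rw [dgG, hu_def]
    have hne : ((n:ℝ)+1) ≠ 0 := by positivity
    field_simp
    ring
  rw [Real.norm_eq_abs, hident, abs_mul, abs_of_pos (show (0:ℝ) < (n:ℝ)+1 by positivity)]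
  have h1 : |(-u)| ^ 3 / (1 - |(-u)|) ≤ 2 * |u| ^ 3 := by
    rw [abs_neg]
    rw [div_le_iff₀ (by linarith [hu, abs_nonneg u])]
    nlinarith [abs_nonneg u, pow_nonneg (abs_nonneg u) 3]
  have h2 : |u| ^ 3 = |t| ^ 3 / ((n:ℝ)+1) ^ 3 := by
    rw [hu_def, abs_div, div_pow, abs_of_pos (show (0:ℝ) < (n:ℝ)+1 by positivity)]
  calc ((n:ℝ)+1) * |(-u + u^2/2 + Real.log (1 - -u))| ≤ ((n:ℝ)+1) * (2 * |u|^3) := by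
        apply mul_le_mul_of_nonneg_left (le_trans key h1) (by positivity)
    _ = 2 * |t|^3 / ((n:ℝ)+1)^2 := by
        rw [h2]; field_simp

lemma dg_hasProd (t : ℝ) (ht : -1 < t) :
    HasProd (fun n : ℕ => (1 + t / (n + 1)) ^ (n + 1) * Real.exp (-t + t ^ 2 / (2 * (n + 1))))
      (Real.exp (∑' n, dgG t n)) := by
  convert ((dgG_summable t).hasSum).rexp using 1
  exact funext fun n => dg_factor_eq t ht n

noncomputable def dgP (x : ℝ) (N : ℕ) : ℝ :=
  (2 * π) ^ ((x - 1) / 2) *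
    Real.exp (-(x - 1) * x / 2 - Real.eulerMascheroniConstant * (x - 1) ^ 2 / 2) *
    ∏ k ∈ range N,
      ((1 + (x - 1) / (k + 1)) ^ (k + 1) * Real.exp (-(x - 1) + (x - 1) ^ 2 / (2 * (k + 1))))

lemma dgP_tendsto (x : ℝ) (hx : 0 < x) :
    Tendsto (dgP x) atTop (𝓝 (doubleGamma x)) := by
  have ht : -1 < x - 1 := by linarith
  have h := (dg_hasProd (x - 1) ht).tendsto_prod_nat
  unfold doubleGamma dgP
  rw [(dg_hasProd (x - 1) ht).tprod_eq]
  exact tendsto_const_nhds.mul h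

lemma dg_tele (x : ℝ) (hx : 0 < x) (N : ℕ) :
    (∏ k ∈ range N, (1 + x / (k + 1)) ^ (k + 1)) * ∏ j ∈ range N, (x + j)
      = ((N : ℝ) + x) ^ N * ∏ k ∈ range N, (1 + (x - 1) / (k + 1)) ^ (k + 1) := by
  induction N with
  | zero => simp
  | succ N ih =>
    have hN1 : (0:ℝ) < (N:ℝ) + 1 := by positivity
    have e1 : (1 : ℝ) + x / ((N:ℝ) + 1) = ((N:ℝ) + 1 + x) / ((N:ℝ) + 1) := by field_simp
    have e2 : (1 : ℝ) + (x - 1) / ((N:ℝ) + 1) = ((N:ℝ) + x) / ((N:ℝ) + 1) := by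
      field_simp
      ring
    have key : (((N:ℝ)) + x) ^ N * ((1:ℝ) + x / ((N:ℝ) + 1)) ^ (N + 1) * (x + (N:ℝ))
        = ((N:ℝ) + 1 + x) ^ (N + 1) * ((1:ℝ) + (x - 1) / ((N:ℝ) + 1)) ^ (N + 1) := by
      rw [e1, e2, div_pow, div_pow, pow_succ ((N:ℝ) + x)]
      have hne : ((N:ℝ) + 1) ^ (N + 1) ≠ 0 := by positivity
      field_simp
      ring
    rw [prod_range_succ, prod_range_succ, prod_range_succ]
    push_cast
    linear_combination (((1:ℝ) + x / ((N:ℝ) + 1)) ^ (N + 1) * (x + (N:ℝ))) * ih +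
      (∏ k ∈ range N, ((1:ℝ) + (x - 1) / ((k:ℝ) + 1)) ^ (k + 1)) * key

noncomputable def dgC (x : ℝ) (N : ℕ) : ℝ :=
  (2 * π) ^ ((1:ℝ) / 2) *
    Real.exp (-x - Real.eulerMascheroniConstant * (2 * x - 1) / 2 - N
      + (2 * x - 1) / 2 * ∑ k ∈ range N, 1 / ((k:ℝ) + 1)) *
    (((N:ℝ) + x) ^ N / ∏ j ∈ range N, (x + j))

lemma dg_sum_shift (x : ℝ) (N : ℕ) :
    ∑ k ∈ range N, (-x + x ^ 2 / (2 * ((k:ℝ) + 1)))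
      = (∑ k ∈ range N, (-(x - 1) + (x - 1) ^ 2 / (2 * ((k:ℝ) + 1))))
        + (-(N:ℝ) + (2 * x - 1) / 2 * ∑ k ∈ range N, 1 / ((k:ℝ) + 1)) := by
  have hN : -(N:ℝ) = ∑ _k ∈ range N, (-1 : ℝ) := by simp
  rw [hN, mul_sum, ← sum_add_distrib, ← sum_add_distrib]
  refine sum_congr rfl fun k _ => ?_
  have hk : ((k:ℝ) + 1) ≠ 0 := by positivity
  field_simp
  ring

noncomputable def dgQ (x : ℝ) (N : ℕ) : ℝ :=
  ∏ k ∈ range N, (1 + (x - 1) / ((k:ℝ) + 1)) ^ (k + 1)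

noncomputable def dgE (x : ℝ) (N : ℕ) : ℝ :=
  -(x - 1) * x / 2 - Real.eulerMascheroniConstant * (x - 1) ^ 2 / 2
    + ∑ k ∈ range N, (-(x - 1) + (x - 1) ^ 2 / (2 * ((k:ℝ) + 1)))

lemma dgP_eq (x : ℝ) (N : ℕ) :
    dgP x N = (2 * π) ^ ((x - 1) / 2) * dgQ x N * Real.exp (dgE x N) := by
  unfold dgP dgQ dgE
  rw [prod_mul_distrib, ← Real.exp_sum, Real.exp_add]
  ring

lemma dgP_succ_eq (x : ℝ) (hx : 0 < x) (N : ℕ) :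
    dgP (x + 1) N = dgC x N * dgP x N := by
  have h2pi : (0:ℝ) < 2 * π := by positivity
  have hprodpos : (0:ℝ) < ∏ j ∈ range N, (x + (j:ℝ)) :=
    prod_pos fun j _ => by positivity
  have hQ : dgQ (x + 1) N
      = (((N:ℝ) + x) ^ N / ∏ j ∈ range N, (x + j)) * dgQ x N := by
    unfold dgQ
    simp only [add_sub_cancel_right]
    rw [div_mul_eq_mul_div, eq_div_iff (ne_of_gt hprodpos), mul_comm,
      mul_comm (∏ j ∈ range N, (x + (j:ℝ))) _]
    exact dg_tele x hx N
  have hE : dgE (x + 1) N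
      = (-x - Real.eulerMascheroniConstant * (2 * x - 1) / 2 - N
          + (2 * x - 1) / 2 * ∑ k ∈ range N, 1 / ((k:ℝ) + 1)) + dgE x N := by
    unfold dgE
    simp only [add_sub_cancel_right]
    rw [dg_sum_shift x N]
    ring
  rw [dgP_eq, dgP_eq, dgC, hQ, hE, Real.exp_add,
    show (x + 1 - 1) / 2 = 1 / 2 + (x - 1) / 2 by ring, Real.rpow_add h2pi]
  ring

lemma dgC_eq (x : ℝ) (hx : 0 < x) {N : ℕ} (hN : 1 ≤ N) :
    dgC x N
    = Real.GammaSeq x N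
      * Real.exp ((x - 1 / 2) * ((∑ k ∈ range N, 1 / ((k:ℝ) + 1))
          - Real.log N - Real.eulerMascheroniConstant))
      * ((1 + x / N) ^ N * Real.exp (-x))
      * (Real.sqrt π / Stirling.stirlingSeq N)
      * ((x + N) / N) := by
  rw [dgC]
  have hN0 : (0:ℝ) < N := by exact_mod_cast hN
  have hprodpos : (0:ℝ) < ∏ j ∈ range N, (x + (j:ℝ)) :=
    prod_pos fun j _ => by positivity
  set H := ∑ k ∈ range N, 1 / ((k:ℝ) + 1) with hH
  set L := Real.exp ((x - 1 / 2) * Real.log N) with hL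
  set s := Real.exp (Real.log N / 2) with hs
  have hss : s * s = (N:ℝ) := by
    rw [hs, ← Real.exp_add, show Real.log N / 2 + Real.log N / 2 = Real.log N by ring,
      Real.exp_log hN0]
  have hNx : (N:ℝ) ^ x = L * s := by
    rw [Real.rpow_def_of_pos hN0, hL, hs, ← Real.exp_add]
    congr 1; ring
  have h2pi : (2 * π) ^ ((1:ℝ) / 2) = Real.sqrt 2 * Real.sqrt π := by
    rw [← Real.sqrt_eq_rpow, Real.sqrt_mul (by norm_num : (0:ℝ) ≤ 2)]
  have hsqrt2N : Real.sqrt (2 * N) = Real.sqrt 2 * s := by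
    rw [Real.sqrt_mul (by norm_num : (0:ℝ) ≤ 2), hs]
    congr 1
    rw [Real.sqrt_eq_rpow, Real.rpow_def_of_pos hN0]
    congr 1; ring
  have hcN : Real.exp (-x - Real.eulerMascheroniConstant * (2 * x - 1) / 2 - N
        + (2 * x - 1) / 2 * H)
      = Real.exp ((x - 1 / 2) * H) * (Real.exp x)⁻¹
        * (Real.exp ((x - 1 / 2) * Real.eulerMascheroniConstant))⁻¹ * (Real.exp (N:ℝ))⁻¹ := by
    rw [← Real.exp_neg, ← Real.exp_neg, ← Real.exp_neg, ← Real.exp_add, ← Real.exp_add,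
      ← Real.exp_add]
    congr 1; ring
  have hu : Real.exp ((x - 1 / 2) * (H - Real.log N - Real.eulerMascheroniConstant))
      = Real.exp ((x - 1 / 2) * H) * L⁻¹
        * (Real.exp ((x - 1 / 2) * Real.eulerMascheroniConstant))⁻¹ := by
    rw [hL, ← Real.exp_neg, ← Real.exp_neg, ← Real.exp_add, ← Real.exp_add]
    congr 1; ring
  have hv : (1 + x / (N:ℝ)) ^ N = ((N:ℝ) + x) ^ N / (N:ℝ) ^ N := by
    rw [show (1 + x / (N:ℝ)) = ((N:ℝ) + x) / N by field_simp, div_pow]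
  have hw : ((N:ℝ) / Real.exp 1) ^ N = (N:ℝ) ^ N / Real.exp (N:ℝ) := by
    rw [div_pow, ← Real.exp_nat_mul, mul_one]
  rw [Real.GammaSeq, prod_range_succ, Stirling.stirlingSeq, hcN, hu, hv, hw, hNx, h2pi,
    hsqrt2N, Real.exp_neg, show (x + (N:ℝ)) / (N:ℝ) = (x + N) / (s * s) by rw [hss]]
  have hxN : x + (N:ℝ) ≠ 0 := by positivity
  have hfact : ((N.factorial : ℝ)) ≠ 0 := Nat.cast_ne_zero.mpr N.factorial_ne_zero
  have hNN : ((N:ℝ)) ^ N ≠ 0 := by positivity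
  have hsq2 : Real.sqrt 2 ≠ 0 := by positivity
  have hsqpi : Real.sqrt π ≠ 0 := by positivity
  have hs0 : s ≠ 0 := Real.exp_ne_zero _
  have hL0 : L ≠ 0 := Real.exp_ne_zero _
  field_simp

lemma dgC_tendsto (x : ℝ) (hx : 0 < x) :
    Tendsto (dgC x) atTop (𝓝 (Real.Gamma x)) := by
  have hHlog : Tendsto (fun N : ℕ => (∑ k ∈ range N, 1 / ((k:ℝ) + 1)) - Real.log N)
      atTop (𝓝 Real.eulerMascheroniConstant) := by
    apply Real.tendsto_harmonic_sub_log.congr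
    intro n
    congr 1
    rw [harmonic]
    push_cast
    simp [one_div]
  have hu : Tendsto (fun N : ℕ => Real.exp ((x - 1 / 2) *
      ((∑ k ∈ range N, 1 / ((k:ℝ) + 1)) - Real.log N - Real.eulerMascheroniConstant)))
      atTop (𝓝 1) := by
    have h0 := (hHlog.sub_const Real.eulerMascheroniConstant).const_mul (x - 1 / 2)
    have h1 := (Real.continuous_exp.tendsto _).comp h0
    simpa [Function.comp_def] using h1
  have hv : Tendsto (fun N : ℕ => (1 + x / (N:ℝ)) ^ N * Real.exp (-x)) atTop (𝓝 1) := by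
    have h := (Real.tendsto_one_add_div_pow_exp x).mul_const (Real.exp (-x))
    simpa [← Real.exp_add] using h
  have hw : Tendsto (fun N : ℕ => Real.sqrt π / Stirling.stirlingSeq N) atTop (𝓝 1) := by
    have hpi : Real.sqrt π ≠ 0 := by positivity
    have h := (tendsto_const_nhds (x := Real.sqrt π)).div
      Stirling.tendsto_stirlingSeq_sqrt_pi hpi
    simpa [div_self hpi, Pi.div_def] using h
  have hz : Tendsto (fun N : ℕ => (x + N) / (N:ℝ)) atTop (𝓝 1) := by
    have h := (tendsto_one_div_atTop_nhds_zero_nat.const_mul x).add_const 1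
    rw [mul_zero, zero_add] at h
    apply h.congr'
    filter_upwards [eventually_ge_atTop 1] with N hN
    have hN0 : ((N:ℝ)) ≠ 0 := by positivity
    field_simp
  have hG := Real.GammaSeq_tendsto_Gamma x
  have hall := (((hG.mul hu).mul hv).mul hw).mul hz
  simp only [mul_one] at hall
  apply hall.congr'
  filter_upwards [eventually_ge_atTop 1] with N hN
  exact (dgC_eq x hx hN).symm

theorem doubleGamma_add_one (x : ℝ) (hx : 0 < x) :
    doubleGamma (x + 1) = Real.Gamma x * doubleGamma x := by
  have h1 : Tendsto (dgP (x + 1)) atTop (𝓝 (doubleGamma (x + 1))) :=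
    dgP_tendsto (x + 1) (by linarith)
  have h2 : Tendsto (fun N => dgC x N * dgP x N) atTop (𝓝 (Real.Gamma x * doubleGamma x)) :=
    (dgC_tendsto x hx).mul (dgP_tendsto x hx)
  exact tendsto_nhds_unique h1 (h2.congr fun N => (dgP_succ_eq x hx N).symm)
end

section
/- Malmsten's formula: for every real x > 0, ln Γ(x) = ∫_0^∞ (e^{−u}/u) · ( (x−1) − (1 − e^{−(x−1)u})/(1 − e^{−u}) ) du. -/
open Real MeasureTheory Set Filter

namespace Malmsten

noncomputable def f (x u : ℝ) : ℝ :=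
  (Real.exp (-u) / u) * ((x - 1) - (1 - Real.exp (-(x - 1) * u)) / (1 - Real.exp (-u)))

lemma one_sub_exp_pos {u : ℝ} (hu : 0 < u) : 0 < 1 - Real.exp (-u) :=
  sub_pos.mpr (Real.exp_lt_one_iff.mpr (by linarith))

lemma continuousOn_f (x : ℝ) : ContinuousOn (f x) (Set.Ioi 0) := by
  unfold f
  apply ContinuousOn.mul
  · exact (Real.continuous_exp.comp continuous_neg).continuousOn.div continuousOn_id
      fun u hu => ne_of_gt hu
  · apply ContinuousOn.sub continuousOn_const
    apply ContinuousOn.div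
    · exact (continuous_const.sub (Real.continuous_exp.comp (continuous_const.mul
        continuous_id))).continuousOn
    · exact (continuous_const.sub (Real.continuous_exp.comp continuous_neg)).continuousOn
    · exact fun u hu => (one_sub_exp_pos hu).ne'

lemma integrableOn_f {x : ℝ} (hx : 0 < x) : IntegrableOn (f x) (Set.Ioi 0) := by
  set δ : ℝ := min (1/2) (1/(1+|x-1|)) with hδdef
  have hδpos : 0 < δ := lt_min (by norm_num) (by positivity)
  have hδhalf : δ ≤ 1/2 := min_le_left _ _
  have h1 : IntegrableOn (f x) (Set.Ioc 0 δ) := by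
    refine Integrable.mono'
      (integrableOn_const (C := 2*((x-1)^2 + |x-1|)) measure_Ioc_lt_top.ne)
      (((continuousOn_f x).mono Set.Ioc_subset_Ioi_self).aestronglyMeasurable measurableSet_Ioc)
      (((ae_restrict_iff' measurableSet_Ioc).mpr (ae_of_all _ ?_)) :
        ∀ᵐ u ∂(volume.restrict (Set.Ioc 0 δ)), ‖f x u‖ ≤ 2*((x-1)^2 + |x-1|))
    intro u hu
    obtain ⟨hu0, huδ⟩ := hu
    have hu1 : u ≤ 1/2 := le_trans huδ hδhalf
    have hxu : |(x-1)*u| ≤ 1 := by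
      rw [abs_mul, abs_of_pos hu0]
      calc |x-1| * u ≤ |x-1| * (1/(1+|x-1|)) := by
            gcongr
            exact le_trans huδ (min_le_right _ _)
        _ ≤ 1 := by
            rw [mul_one_div, div_le_one (by positivity)]
            linarith
    have hg1 : |Real.exp (-(x-1)*u) - 1 - (-(x-1)*u)| ≤ ((x-1)*u)^2 := by
      have := Real.abs_exp_sub_one_sub_id_le (x := -((x-1)*u)) (by rwa [abs_neg])
      have earg : -((x-1)*u) = -(x-1)*u := by ring
      rw [earg] at this
      calc |Real.exp (-(x-1)*u) - 1 - (-(x-1)*u)|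
          = |Real.exp (-(x-1)*u) - 1 - -(x-1)*u| := by ring_nf
        _ ≤ (-(x-1)*u)^2 := this
        _ = ((x-1)*u)^2 := by ring
    have hg2 : |Real.exp (-u) - 1 - (-u)| ≤ u^2 := by
      have := Real.abs_exp_sub_one_sub_id_le (x := -u) (by rw [abs_neg, abs_of_pos hu0]; linarith)
      simpa using this
    have hD : u/2 ≤ 1 - Real.exp (-u) := by
      have h := abs_le.mp hg2
      nlinarith [h.1, h.2]
    have hDpos : 0 < 1 - Real.exp (-u) := one_sub_exp_pos hu0
    have hN : |(x-1)*(1 - Real.exp (-u)) - (1 - Real.exp (-(x-1)*u))| ≤ ((x-1)^2 + |x-1|) * u^2 := by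
      have key : (x-1)*(1 - Real.exp (-u)) - (1 - Real.exp (-(x-1)*u))
          = (Real.exp (-(x-1)*u) - 1 - (-(x-1)*u)) - (x-1) * (Real.exp (-u) - 1 - (-u)) := by ring
      rw [key]
      calc |(Real.exp (-(x-1)*u) - 1 - (-(x-1)*u)) - (x-1) * (Real.exp (-u) - 1 - (-u))|
          ≤ |Real.exp (-(x-1)*u) - 1 - (-(x-1)*u)| + |x-1| * |Real.exp (-u) - 1 - (-u)| := by
            rw [← abs_mul]; exact abs_sub _ _
        _ ≤ ((x-1)*u)^2 + |x-1| * u^2 := by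
            gcongr
        _ = ((x-1)^2 + |x-1|) * u^2 := by ring
    have hbr : (x-1) - (1 - Real.exp (-(x-1)*u))/(1 - Real.exp (-u))
        = ((x-1)*(1 - Real.exp (-u)) - (1 - Real.exp (-(x-1)*u)))/(1 - Real.exp (-u)) := by
      field_simp
    have hstep : |f x u| ≤ (Real.exp (-u)/u) * ((((x-1)^2+|x-1|) * u^2) / (u/2)) := by
      rw [f, hbr, abs_mul, abs_div, abs_div, abs_of_pos (Real.exp_pos _), abs_of_pos hu0,
        abs_of_pos hDpos]
      gcongr
    have heq : (Real.exp (-u)/u) * ((((x-1)^2+|x-1|) * u^2) / (u/2))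
        = 2*((x-1)^2+|x-1|) * Real.exp (-u) := by
      field_simp
    have hexp1 : Real.exp (-u) ≤ 1 := Real.exp_le_one_iff.mpr (by linarith)
    rw [Real.norm_eq_abs]
    calc |f x u| ≤ 2*((x-1)^2+|x-1|) * Real.exp (-u) := by rw [← heq]; exact hstep
      _ ≤ 2*((x-1)^2 + |x-1|) := by nlinarith [Real.exp_pos (-u), abs_nonneg (x-1), sq_nonneg (x-1)]
  have h2 : IntegrableOn (f x) (Set.Ioc δ 1) := by
    have : IntegrableOn (f x) (Set.Icc δ 1) :=
      ((continuousOn_f x).mono (fun u hu => lt_of_lt_of_le hδpos hu.1)).integrableOn_Icc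
    exact this.mono_set Set.Ioc_subset_Icc_self
  have h3 : IntegrableOn (f x) (Set.Ioi 1) := by
    have hint : IntegrableOn (fun u => (|x-1|+2) * (Real.exp (-1*u) + Real.exp (-x*u)))
        (Set.Ioi 1) :=
      ((exp_neg_integrableOn_Ioi 1 one_pos).add (exp_neg_integrableOn_Ioi 1 hx)).const_mul _
    refine Integrable.mono' hint
      (((continuousOn_f x).mono (Set.Ioi_subset_Ioi (by norm_num))).aestronglyMeasurable
        measurableSet_Ioi)
      ((ae_restrict_iff' measurableSet_Ioi).mpr (ae_of_all _ ?_))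
    intro u hu
    have hu1 : 1 < u := hu
    have hu0 : 0 < u := lt_trans one_pos hu1
    have hDpos := one_sub_exp_pos hu0
    have h2e : (2:ℝ) ≤ Real.exp 1 := by have := Real.add_one_le_exp 1; linarith
    have hD2 : (1:ℝ)/2 ≤ 1 - Real.exp (-u) := by
      have hm : Real.exp (-u) ≤ Real.exp (-1) := Real.exp_le_exp.mpr (by linarith)
      have he : Real.exp (-1) ≤ 1/2 := by
        rw [Real.exp_neg]
        rw [inv_le_comm₀ (Real.exp_pos 1) (by norm_num)]
        norm_num
        linarith
      linarith
    have hA : 0 < Real.exp (-(x-1)*u) := Real.exp_pos _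
    have e3 : Real.exp (-u) * Real.exp (-(x-1)*u) = Real.exp (-x*u) := by
      rw [← Real.exp_add]; ring_nf
    rw [Real.norm_eq_abs, f, abs_mul]
    have hb1 : |Real.exp (-u)/u| ≤ Real.exp (-u) := by
      rw [abs_div, abs_of_pos (Real.exp_pos _), abs_of_pos hu0, div_le_iff₀ hu0]
      nlinarith [Real.exp_pos (-u)]
    have hb2 : |(x - 1) - (1 - Real.exp (-(x - 1) * u)) / (1 - Real.exp (-u))|
        ≤ |x-1| + 2*(1 + Real.exp (-(x-1)*u)) := by
      refine (abs_sub _ _).trans ?_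
      gcongr
      rw [abs_div, abs_of_pos hDpos, div_le_iff₀ hDpos]
      have habs : |1 - Real.exp (-(x-1)*u)| ≤ 1 + Real.exp (-(x-1)*u) :=
        abs_le.mpr ⟨by linarith, by linarith⟩
      nlinarith
    calc |Real.exp (-u)/u| * |(x - 1) - (1 - Real.exp (-(x - 1) * u)) / (1 - Real.exp (-u))|
        ≤ Real.exp (-u) * (|x-1| + 2*(1 + Real.exp (-(x-1)*u))) :=
          mul_le_mul hb1 hb2 (abs_nonneg _) (Real.exp_pos _).le
      _ ≤ (|x-1|+2) * (Real.exp (-1*u) + Real.exp (-x*u)) := by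
          have e4 : Real.exp (-1*u) = Real.exp (-u) := by norm_num
          rw [e4]
          nlinarith [Real.exp_pos (-u), Real.exp_pos (-x*u), abs_nonneg (x-1), e3,
            mul_nonneg (abs_nonneg (x-1)) (Real.exp_pos (-x*u)).le]
  have h12 : IntegrableOn (f x) (Set.Ioc 0 1) := by
    have := h1.union h2
    rwa [Set.Ioc_union_Ioc_eq_Ioc hδpos.le (by linarith : δ ≤ 1)] at this
  have hfin := h12.union h3
  rwa [Set.Ioc_union_Ioi_eq_Ioi (by norm_num : (0:ℝ) ≤ 1)] at hfin


lemma f_succ {x u : ℝ} (hu : 0 < u) :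
    f (x + 1) u = f x u + (Real.exp (-u) - Real.exp (-x * u)) / u := by
  have hu' : u ≠ 0 := hu.ne'
  have hD : 1 - Real.exp (-u) ≠ 0 := (one_sub_exp_pos hu).ne'
  have e1 : -(x + 1 - 1) * u = -x * u := by ring
  have e2 : Real.exp (-u) * Real.exp (-(x - 1) * u) = Real.exp (-x * u) := by
    rw [← Real.exp_add]; ring_nf
  rw [f, f, e1, ← e2]
  field_simp
  ring

lemma frullani_integrable {a : ℝ} (ha : 0 < a) :
    IntegrableOn (fun u => (Real.exp (-u) - Real.exp (-a*u))/u) (Set.Ioi 0) := by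
  have h := (integrableOn_f (by linarith : (0:ℝ) < a+1)).sub (integrableOn_f ha)
  refine (integrableOn_congr_fun (fun u hu => ?_) measurableSet_Ioi).mp h
  show f (a + 1) u - f a u = _
  rw [f_succ (x := a) hu]
  ring

noncomputable def FL (a : ℝ) : ℝ := ∫ u in Set.Ioi (0:ℝ), (Real.exp (-u) - Real.exp (-a*u))/u

lemma hasDerivAt_FL {a : ℝ} (ha : 0 < a) : HasDerivAt FL a⁻¹ a := by
  have key := hasDerivAt_integral_of_dominated_loc_of_deriv_le
    (F := fun b u => (Real.exp (-u) - Real.exp (-b*u))/u)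
    (F' := fun b u => Real.exp (-b*u))
    (bound := fun u => Real.exp (-(a/2)*u))
    (μ := volume.restrict (Set.Ioi 0)) (Metric.ball_mem_nhds a (half_pos ha))
    (Eventually.of_forall fun b => Measurable.aestronglyMeasurable (by fun_prop))
    (frullani_integrable ha)
    (Measurable.aestronglyMeasurable (by fun_prop))
    ((ae_restrict_iff' measurableSet_Ioi).mpr (ae_of_all _ ?_))
    (exp_neg_integrableOn_Ioi 0 (half_pos ha))
    ((ae_restrict_iff' measurableSet_Ioi).mpr (ae_of_all _ ?_))
  · have hval : (∫ u in Set.Ioi (0:ℝ), Real.exp (-a*u)) = a⁻¹ := by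
      simp only [neg_mul]
      rw [integral_comp_mul_left_Ioi (fun v => Real.exp (-v)) 0 ha]
      simp [integral_exp_neg_Ioi, integral_exp_Iic_zero]
    exact hval ▸ key.2
  · intro u hu b hb
    rw [Real.norm_eq_abs, abs_of_pos (Real.exp_pos _)]
    have hb' : a/2 ≤ b := by
      rw [Metric.mem_ball, Real.dist_eq, abs_lt] at hb
      linarith [hb.1]
    exact Real.exp_le_exp.mpr (by nlinarith [le_of_lt (show (0:ℝ) < u from hu)])
  · intro u hu b hb
    have hu0 : (0:ℝ) < u := hu
    have h1 : HasDerivAt (fun b : ℝ => -b*u) (-u) b := by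
      simpa using (hasDerivAt_id b).neg.mul_const u
    have h2 := h1.exp
    have h4 := ((hasDerivAt_const b (Real.exp (-u))).sub h2).div_const u
    refine h4.congr_deriv ?_
    field_simp
    ring

lemma FL_one : FL 1 = 0 := by
  unfold FL
  norm_num

lemma FL_eq_log {a : ℝ} (ha : 0 < a) : FL a = Real.log a := by
  have key := constant_of_has_deriv_right_zero (f := fun s => FL s - Real.log s)
    (a := min 1 a) (b := max 1 a) ?_ ?_
  · have h1 := key 1 ⟨min_le_left _ _, le_max_left _ _⟩
    have h2 := key a ⟨min_le_right _ _, le_max_right _ _⟩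
    have h3 : FL 1 - Real.log 1 = 0 := by rw [FL_one, Real.log_one]; ring
    have h4 := h2.trans h1.symm
    rw [h3] at h4
    linarith [h4]
  · intro s hs
    have hspos : 0 < s := lt_of_lt_of_le (lt_min one_pos ha) hs.1
    exact ((hasDerivAt_FL hspos).sub (Real.hasDerivAt_log hspos.ne')).continuousAt.continuousWithinAt
  · intro s hs
    have hspos : 0 < s := lt_of_lt_of_le (lt_min one_pos ha) hs.1
    have := (hasDerivAt_FL hspos).sub (Real.hasDerivAt_log hspos.ne')
    rw [sub_self] at this
    exact this.hasDerivWithinAt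

lemma frullani {a : ℝ} (ha : 0 < a) :
    (∫ u in Set.Ioi (0:ℝ), (Real.exp (-u) - Real.exp (-a*u))/u) = Real.log a := FL_eq_log ha

noncomputable def M (x : ℝ) : ℝ := ∫ u in Set.Ioi (0 : ℝ), f x u

lemma M_one : M 1 = 0 := by
  have h : ∀ u : ℝ, f 1 u = 0 := by
    intro u
    norm_num [f]
  simp [M, h]

lemma M_feq {y : ℝ} (hy : 0 < y) : M (y + 1) = M y + Real.log y := by
  have h1 : (∫ u in Set.Ioi (0:ℝ), f (y+1) u)
      = ∫ u in Set.Ioi (0:ℝ), (f y u + (Real.exp (-u) - Real.exp (-y*u))/u) :=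
    setIntegral_congr_fun measurableSet_Ioi (fun u hu => f_succ hu)
  rw [M, h1, integral_add (integrableOn_f hy) (frullani_integrable hy), frullani hy]
  rfl

lemma convexOn_M : ConvexOn ℝ (Set.Ioi 0) M := by
  refine ⟨convex_Ioi 0, fun p hp q hq a b ha hb hab => ?_⟩
  obtain rfl : b = 1 - a := by linarith
  simp only [smul_eq_mul]
  have hp' : (0:ℝ) < p := hp
  have hq' : (0:ℝ) < q := hq
  have hc : 0 < a * p + (1-a) * q := by
    rcases eq_or_lt_of_le ha with h | h
    · rw [← h]; norm_num; exact hq'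
    · have h2 : 0 ≤ (1-a) * q := mul_nonneg (by linarith) hq'.le
      nlinarith [mul_pos h hp']
  have key : ∀ u ∈ Set.Ioi (0:ℝ), f (a*p + (1-a)*q) u ≤ a * f p u + (1-a) * f q u := by
    intro u hu
    have hu0 : (0:ℝ) < u := hu
    have hD := one_sub_exp_pos hu0
    have hle := convexOn_exp.2 (Set.mem_univ (-(p-1)*u)) (Set.mem_univ (-(q-1)*u)) ha hb hab
    simp only [smul_eq_mul] at hle
    have harg : a * (-(p-1)*u) + (1-a) * (-(q-1)*u) = -(a*p + (1-a)*q - 1)*u := by ring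
    rw [harg] at hle
    have hexpand : a * f p u + (1-a) * f q u - f (a*p + (1-a)*q) u
        = (Real.exp (-u)/(u*(1 - Real.exp (-u)))) *
          (a * Real.exp (-(p-1)*u) + (1-a) * Real.exp (-(q-1)*u)
            - Real.exp (-(a*p + (1-a)*q - 1)*u)) := by
      rw [f, f, f]; field_simp; ring
    have hcoef : 0 ≤ Real.exp (-u)/(u*(1 - Real.exp (-u))) :=
      div_nonneg (Real.exp_pos _).le (mul_pos hu0 hD).le
    nlinarith [mul_nonneg hcoef (sub_nonneg.mpr hle)]
  calc M (a*p + (1-a)*q) ≤ ∫ u in Set.Ioi (0:ℝ), (a * f p u + (1-a) * f q u) := by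
        exact setIntegral_mono_on (integrableOn_f hc)
          (((integrableOn_f hp').const_mul a).add ((integrableOn_f hq').const_mul (1-a)))
          measurableSet_Ioi key
    _ = a * M p + (1-a) * M q := by
        rw [integral_add ((integrableOn_f hp').const_mul a) ((integrableOn_f hq').const_mul (1-a)),
          MeasureTheory.integral_const_mul, MeasureTheory.integral_const_mul]
        rfl

end Malmsten

theorem malmsten_formula (x : ℝ) (hx : 0 < x) :
    Real.log (Real.Gamma x) =
      ∫ u in Set.Ioi (0 : ℝ),
        (Real.exp (-u) / u) *
          ((x - 1) - (1 - Real.exp (-(x - 1) * u)) / (1 - Real.exp (-u))) := by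
  have h1 := Real.BohrMollerup.tendsto_logGammaSeq Malmsten.convexOn_M
    (fun {y} hy => Malmsten.M_feq hy) hx
  have h2 := Real.BohrMollerup.tendsto_log_gamma hx
  have h3 := tendsto_nhds_unique h2 h1
  rw [Malmsten.M_one, sub_zero] at h3
  exact h3
end

section
/- Duplication formula for the double gamma function: for every real x > 0, G(2x) = G(1/2)^{−2} · 2^{(x−1)(2x−1)} · π^{−x} · Γ(x) · G(x)² · G(x + 1/2)². -/
open Real Filter Finset Nat Topology

noncomputable def fterm (t : ℝ) (n : ℕ) : ℝ :=
  ((n : ℝ) + 1) * Real.log (1 + t / ((n : ℝ) + 1)) - t + t ^ 2 / (2 * ((n : ℝ) + 1))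

lemma one_add_div_pos {t : ℝ} (ht : -1 < t) (n : ℕ) : 0 < 1 + t / ((n : ℝ) + 1) := by
  have hn : (0:ℝ) < (n:ℝ) + 1 := by positivity
  have h1 : (-1 : ℝ) < t / ((n:ℝ)+1) := by
    rw [lt_div_iff₀ hn]
    nlinarith [Nat.cast_nonneg (α := ℝ) n]
  linarith

lemma summable_fterm (t : ℝ) : Summable (fterm t) := by
  have hg : Summable (fun n : ℕ => 2 * |t| ^ 3 / ((n : ℝ) + 1) ^ 2) := by
    have h0 : Summable (fun n : ℕ => 1 / ((n : ℝ)) ^ 2) :=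
      summable_one_div_nat_pow.mpr one_lt_two
    have h1 : Summable (fun n : ℕ => 1 / ((n : ℝ) + 1) ^ 2) := by
      have := (summable_nat_add_iff (f := fun n : ℕ => 1 / ((n : ℝ)) ^ 2) 1).mpr h0
      refine this.congr fun n => ?_
      push_cast
      ring
    have := h1.mul_left (2 * |t| ^ 3)
    refine this.congr fun n => ?_
    rw [div_eq_mul_inv, div_eq_mul_inv, one_mul]
  refine Summable.of_norm_bounded_eventually_nat hg ?_
  filter_upwards [eventually_ge_atTop (⌈2 * |t|⌉₊)] with n hn
  have hn' : 2 * |t| ≤ (n : ℝ) + 1 := by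
    calc 2 * |t| ≤ (⌈2 * |t|⌉₊ : ℝ) := Nat.le_ceil _
    _ ≤ (n : ℝ) := by exact_mod_cast hn
    _ ≤ (n : ℝ) + 1 := by linarith
  have hnpos : (0:ℝ) < (n:ℝ) + 1 := by positivity
  set a : ℝ := t / ((n:ℝ) + 1) with ha
  have haabs : |a| ≤ 1 / 2 := by
    rw [ha, abs_div, abs_of_pos hnpos, div_le_iff₀ hnpos]
    linarith
  have hlt : |(-a)| < 1 := by rw [abs_neg]; linarith
  have key := Real.abs_log_sub_add_sum_range_le hlt 2
  have hsum : (∑ i ∈ Finset.range 2, (-a) ^ (i+1) / ((i:ℝ)+1)) = -a + a^2/2 := by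
    simp [Finset.sum_range_succ]; ring
  rw [hsum, sub_neg_eq_add] at key
  have hfe : fterm t n = ((n:ℝ)+1) * (-a + a^2/2 + Real.log (1 + a)) := by
    rw [fterm, ha]; field_simp; ring
  have habs3 : |(-a)| ^ (2+1) / (1 - |(-a)|) ≤ 2 * |a| ^ 3 := by
    rw [abs_neg]
    have h1 : (1:ℝ) - |a| ≥ 1/2 := by linarith
    have h2 : |a| ^ 3 ≥ 0 := by positivity
    rw [div_le_iff₀ (by linarith)]
    norm_num
    nlinarith [h2, haabs]
  rw [Real.norm_eq_abs, hfe, abs_mul, abs_of_pos hnpos]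
  have : |(-a) + (a^2/2 + Real.log (1+a))| ≤ 2 * |a| ^ 3 := by
    calc _ = |(-a + a^2/2) + Real.log (1+a)| := by ring_nf
    _ ≤ 2 * |a|^3 := le_trans key habs3
  calc ((n:ℝ)+1) * |(-a) + a^2/2 + Real.log (1+a)| ≤ ((n:ℝ)+1) * (2 * |a|^3) := by
        apply mul_le_mul_of_nonneg_left _ (le_of_lt hnpos)
        rw [add_assoc]; exact this
  _ = 2 * |t|^3 / ((n:ℝ)+1)^2 := by
        rw [ha, abs_div, abs_of_pos hnpos, div_pow]
        field_simp

noncomputable def Hsum (N : ℕ) : ℝ := ∑ i ∈ Finset.range N, 1 / ((i : ℝ) + 1)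

lemma doubleGamma_eq_exp (x : ℝ) (hx : 0 < x) :
    doubleGamma x = Real.exp ((x - 1) / 2 * Real.log (2 * π)
      + (-(x - 1) * x / 2 - Real.eulerMascheroniConstant * (x - 1) ^ 2 / 2)
      + ∑' n, fterm (x - 1) n) := by
  have ht : (-1 : ℝ) < x - 1 := by linarith
  have hprod : HasProd
      (fun n : ℕ => (1 + (x - 1) / ((n : ℝ) + 1)) ^ (n + 1) *
        Real.exp (-(x - 1) + (x - 1) ^ 2 / (2 * ((n : ℝ) + 1))))
      (Real.exp (∑' n, fterm (x - 1) n)) := by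
    have h := ((summable_fterm (x - 1)).hasSum).rexp
    refine h.congr_fun fun n => ?_
    have hpos := one_add_div_pos ht n
    rw [Function.comp_apply, fterm,
      show ((n:ℝ)+1) * Real.log (1 + (x-1)/((n:ℝ)+1)) - (x-1) + (x-1)^2/(2*((n:ℝ)+1))
        = ((n+1 : ℕ):ℝ) * Real.log (1 + (x-1)/((n:ℝ)+1))
          + (-(x-1) + (x-1)^2/(2*((n:ℝ)+1))) by push_cast; ring]
    conv_rhs => rw [Real.exp_add, Real.exp_nat_mul, Real.exp_log hpos]
  rw [doubleGamma, hprod.tprod_eq, Real.rpow_def_of_pos (by positivity),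
    ← Real.exp_add, ← Real.exp_add]
  ring_nf

lemma sum_pair (g : ℕ → ℝ) (N : ℕ) :
    ∑ m ∈ Finset.range (2 * N), g m = ∑ n ∈ Finset.range N, (g (2 * n) + g (2 * n + 1)) := by
  induction N with
  | zero => simp
  | succ N ih =>
    rw [Finset.sum_range_succ, ← ih, show 2 * (N + 1) = (2 * N + 1) + 1 by ring,
      Finset.sum_range_succ, Finset.sum_range_succ]
    ring

lemma Tkey (x : ℝ) (hx : 0 < x) (n : ℕ) :
    fterm (2 * x - 1) (2 * n) + fterm (2 * x - 1) (2 * n + 1) - 2 * fterm (x - 1) n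
      - 2 * fterm (x - 1 / 2) n + 2 * fterm (-(1 / 2)) n
    = -Real.log 2 + Real.log (2 * (n : ℝ) + 1) - Real.log ((n : ℝ) + x)
      + (2 * x - 1) ^ 2 / (2 * (2 * (n : ℝ) + 1)) - (x ^ 2 - 2 * x + 3 / 4) / ((n : ℝ) + 1) := by
  set c : ℝ := (n : ℝ) with hc
  have hc0 : (0 : ℝ) ≤ c := Nat.cast_nonneg n
  have h1 : (0:ℝ) < c + 1 := by linarith
  have h2 : (0:ℝ) < 2 * c + 1 := by linarith
  have h3 : (0:ℝ) < 2 * c + 2 := by linarith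
  have h4 : (0:ℝ) < c + x := by linarith
  simp only [fterm]
  push_cast
  have hA : Real.log (1 + (2 * x - 1) / (2 * c + 1)) =
      Real.log 2 + Real.log (c + x) - Real.log (2 * c + 1) := by
    rw [show 1 + (2 * x - 1) / (2 * c + 1) = 2 * (c + x) / (2 * c + 1) by field_simp; ring,
      Real.log_div (by positivity) (by positivity), Real.log_mul (by norm_num) (by positivity)]
  have hB : Real.log (1 + (2 * x - 1) / (2 * c + 1 + 1)) =
      Real.log (1 + (x - 1 / 2) / (c + 1)) := by
    rw [show 1 + (2 * x - 1) / (2 * c + 1 + 1) = 1 + (x - 1 / 2) / (c + 1) by field_simp; ring]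
  have hC : Real.log (1 + (x - 1) / (c + 1)) = Real.log (c + x) - Real.log (c + 1) := by
    rw [show 1 + (x - 1) / (c + 1) = (c + x) / (c + 1) by field_simp; ring,
      Real.log_div (by positivity) (by positivity)]
  have hD : Real.log (1 + (-(1 / 2)) / (c + 1)) =
      Real.log (2 * c + 1) - Real.log 2 - Real.log (c + 1) := by
    rw [show 1 + (-(1 / 2)) / (c + 1) = (2 * c + 1) / (2 * (c + 1)) by field_simp; ring,
      Real.log_div (by positivity) (by positivity), Real.log_mul (by norm_num) (by positivity)]
    ring
  rw [hA, hB, hC, hD]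
  field_simp
  ring

lemma sum_log_odd (N : ℕ) :
    ∑ n ∈ Finset.range N, Real.log (2 * (n : ℝ) + 1)
      = Real.log ((2 * N)! : ℝ) - N * Real.log 2 - Real.log (N ! : ℝ) := by
  induction N with
  | zero => simp
  | succ N ih =>
    rw [Finset.sum_range_succ, ih]
    have h1 : ((2 * (N + 1))! : ℝ) = (2 * (N:ℝ) + 2) * ((2 * (N:ℝ) + 1) * ((2 * N)! : ℝ)) := by
      rw [show 2 * (N + 1) = (2 * N + 1) + 1 by ring, Nat.factorial_succ, Nat.factorial_succ]
      push_cast; ring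
    have h2 : (((N + 1))! : ℝ) = ((N:ℝ) + 1) * (N ! : ℝ) := by
      rw [Nat.factorial_succ]; push_cast; ring
    have hf1 : (0:ℝ) < ((2 * N)! : ℝ) := by exact_mod_cast Nat.factorial_pos _
    have hf2 : (0:ℝ) < (N ! : ℝ) := by exact_mod_cast Nat.factorial_pos _
    have hN1 : (0:ℝ) < (N:ℝ) + 1 := by positivity
    have hlog : Real.log (((2 * (N + 1))! : ℕ) : ℝ)
        = Real.log 2 + Real.log ((N:ℝ) + 1) + Real.log (2 * (N:ℝ) + 1)
          + Real.log ((2 * N)! : ℝ) := by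
      rw [h1, show (2 * (N:ℝ) + 2) = 2 * ((N:ℝ) + 1) by ring]
      rw [Real.log_mul (mul_pos two_pos hN1).ne' (mul_pos (by positivity) hf1).ne']
      rw [Real.log_mul (by positivity : (0:ℝ) < 2 * (N:ℝ) + 1).ne' hf1.ne']
      rw [Real.log_mul (two_pos (α := ℝ)).ne' hN1.ne']
      ring
    have hlog2 : Real.log (((N + 1)! : ℕ) : ℝ) = Real.log ((N:ℝ) + 1) + Real.log (N ! : ℝ) := by
      rw [h2, Real.log_mul hN1.ne' hf2.ne']
    rw [hlog, hlog2]
    push_cast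
    ring

lemma sum_inv_odd (N : ℕ) :
    ∑ n ∈ Finset.range N, 1 / (2 * (n : ℝ) + 1) = Hsum (2 * N) - Hsum N / 2 := by
  induction N with
  | zero => simp [Hsum]
  | succ N ih =>
    have h2 : Hsum (2 * (N + 1)) = Hsum (2 * N) + 1 / (2 * (N:ℝ) + 1) + 1 / (2 * (N:ℝ) + 2) := by
      rw [show 2 * (N + 1) = (2 * N + 1) + 1 by ring, Hsum, Finset.sum_range_succ,
        Finset.sum_range_succ, ← Hsum]
      push_cast; ring
    have h3 : Hsum (N + 1) = Hsum N + 1 / ((N:ℝ) + 1) := by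
      rw [Hsum, Finset.sum_range_succ, ← Hsum]
    rw [Finset.sum_range_succ, ih, h2, h3]
    have hN1 : (0:ℝ) < (N:ℝ) + 1 := by positivity
    field_simp
    ring

lemma sum_log_shift (x : ℝ) (hx : 0 < x) (N : ℕ) (hN : 1 ≤ N) :
    ∑ n ∈ Finset.range N, Real.log ((n : ℝ) + x)
      = x * Real.log N + Real.log (N ! : ℝ) - Real.log (Real.GammaSeq x N)
        - Real.log (x + N) := by
  have hNpos : (0:ℝ) < (N:ℝ) := by exact_mod_cast hN
  have hprod : ∀ j ∈ Finset.range (N + 1), x + (j : ℝ) ≠ 0 := by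
    intro j _; positivity
  have hlogG : Real.log (Real.GammaSeq x N)
      = x * Real.log N + Real.log (N ! : ℝ) - ∑ j ∈ Finset.range (N + 1), Real.log (x + j) := by
    rw [Real.GammaSeq, Real.log_div (by positivity) (Finset.prod_ne_zero_iff.mpr hprod),
      Real.log_mul (by positivity) (by exact_mod_cast (Nat.factorial_pos N).ne'),
      Real.log_rpow hNpos, Real.log_prod hprod]
  have hsplit : ∑ j ∈ Finset.range (N + 1), Real.log (x + (j : ℝ))
      = (∑ n ∈ Finset.range N, Real.log ((n : ℝ) + x)) + Real.log (x + N) := by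
    rw [Finset.sum_range_succ]
    congr 1
    exact Finset.sum_congr rfl fun n _ => by rw [add_comm]
  rw [hlogG, hsplit]
  ring

lemma stirlog (N : ℕ) (hN : 1 ≤ N) :
    Real.log ((2 * N)! : ℝ) - 2 * Real.log (N ! : ℝ) - 2 * N * Real.log 2
        + (1 / 2) * Real.log N
      = Real.log (Stirling.stirlingSeq (2 * N)) - 2 * Real.log (Stirling.stirlingSeq N) := by
  have hNpos : (0:ℝ) < (N:ℝ) := by exact_mod_cast hN
  have e1 := Stirling.log_stirlingSeq_formula (2 * N)
  have e2 := Stirling.log_stirlingSeq_formula N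
  have hc : ((2 * N : ℕ) : ℝ) = 2 * (N : ℝ) := by push_cast; ring
  rw [hc] at e1
  have l1 : Real.log (2 * (2 * (N:ℝ))) = Real.log 2 + (Real.log 2 + Real.log N) := by
    rw [Real.log_mul (by norm_num) (by positivity), Real.log_mul (by norm_num) (by positivity)]
  have l2 : Real.log (2 * (N:ℝ)) = Real.log 2 + Real.log N := by
    rw [Real.log_mul (by norm_num) (by positivity)]
  have l3 : Real.log (2 * (N:ℝ) / Real.exp 1) = Real.log 2 + Real.log N - 1 := by
    rw [Real.log_div (by positivity) (Real.exp_ne_zero 1), l2, Real.log_exp]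
  have l4 : Real.log ((N:ℝ) / Real.exp 1) = Real.log N - 1 := by
    rw [Real.log_div (by positivity) (Real.exp_ne_zero 1), Real.log_exp]
  rw [e1, e2, l1, l2, l3, l4]
  ring

noncomputable def Tterm (x : ℝ) (n : ℕ) : ℝ :=
  -Real.log 2 + Real.log (2 * (n : ℝ) + 1) - Real.log ((n : ℝ) + x)
    + (2 * x - 1) ^ 2 / (2 * (2 * (n : ℝ) + 1)) - (x ^ 2 - 2 * x + 3 / 4) / ((n : ℝ) + 1)

lemma htwo : Tendsto (fun N : ℕ => 2 * N) atTop atTop :=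
  tendsto_atTop_atTop.mpr fun b => ⟨b, fun a ha => by omega⟩

lemma tendsto_Hsum_sub_log : Tendsto (fun N : ℕ => Hsum N - Real.log N) atTop
    (𝓝 Real.eulerMascheroniConstant) := by
  have := Real.tendsto_harmonic_sub_log
  refine this.congr fun n => ?_
  congr 1
  rw [Hsum]
  push_cast [harmonic]
  exact Finset.sum_congr rfl fun i _ => by rw [one_div]

lemma sum_T_closed (x : ℝ) (hx : 0 < x) (N : ℕ) (hN : 1 ≤ N) :
    ∑ n ∈ Finset.range N, Tterm x n
      = (Real.log ((2 * N)! : ℝ) - 2 * Real.log (N ! : ℝ) - 2 * N * Real.log 2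
          + (1 / 2) * Real.log N)
        + Real.log (Real.GammaSeq x N)
        + (Real.log (x + N) - Real.log N)
        + (2 * x ^ 2 - 2 * x + 1 / 2) * (Hsum (2 * N) - Real.log (2 * (N:ℝ)))
        - (2 * x ^ 2 - 3 * x + 1) * (Hsum N - Real.log N)
        + (2 * x ^ 2 - 2 * x + 1 / 2) * Real.log 2 := by
  have hNpos : (0:ℝ) < (N:ℝ) := by exact_mod_cast hN
  have hkey : ∑ n ∈ Finset.range N, Tterm x n
      = (∑ _n ∈ Finset.range N, (-Real.log 2))
        + (∑ n ∈ Finset.range N, Real.log (2 * (n:ℝ) + 1))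
        - (∑ n ∈ Finset.range N, Real.log ((n:ℝ) + x))
        + ((2 * x - 1) ^ 2 / 2) * (∑ n ∈ Finset.range N, 1 / (2 * (n:ℝ) + 1))
        - (x ^ 2 - 2 * x + 3 / 4) * (∑ n ∈ Finset.range N, 1 / ((n:ℝ) + 1)) := by
    rw [Finset.mul_sum, Finset.mul_sum, ← Finset.sum_add_distrib, ← Finset.sum_sub_distrib,
      ← Finset.sum_add_distrib, ← Finset.sum_sub_distrib]
    refine Finset.sum_congr rfl fun n _ => ?_
    have h1 : (0:ℝ) < 2 * (n:ℝ) + 1 := by positivity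
    have h2 : (0:ℝ) < (n:ℝ) + 1 := by positivity
    rw [Tterm]
    field_simp
  rw [hkey, sum_log_odd, sum_inv_odd, sum_log_shift x hx N hN, ← Hsum,
    Finset.sum_const, Finset.card_range, nsmul_eq_mul,
    Real.log_mul two_ne_zero hNpos.ne']
  ring

lemma tendsto_sum_T (x : ℝ) (hx : 0 < x) :
    Tendsto (fun N : ℕ => ∑ n ∈ Finset.range N, Tterm x n) atTop
      (𝓝 (Real.log (Real.Gamma x) + (x - 1 / 2) * Real.eulerMascheroniConstant
        + (2 * x ^ 2 - 2 * x + 1 / 2) * Real.log 2 - (1 / 2) * Real.log π)) := by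
  have hsqrtpi : (0:ℝ) < Real.sqrt π := Real.sqrt_pos.mpr pi_pos
  have hlogcont : ContinuousAt Real.log (Real.sqrt π) := Real.continuousAt_log hsqrtpi.ne'
  have hs : Tendsto (fun N : ℕ => Real.log (Stirling.stirlingSeq N)) atTop
      (𝓝 (Real.log (Real.sqrt π))) :=
    hlogcont.tendsto.comp Stirling.tendsto_stirlingSeq_sqrt_pi
  have hs2 : Tendsto (fun N : ℕ => Real.log (Stirling.stirlingSeq (2 * N))) atTop
      (𝓝 (Real.log (Real.sqrt π))) := hs.comp htwo
  -- Stirling piece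
  have hSt : Tendsto (fun N : ℕ => Real.log ((2 * N)! : ℝ) - 2 * Real.log (N ! : ℝ)
      - 2 * N * Real.log 2 + (1 / 2) * Real.log N) atTop (𝓝 (-((1/2) * Real.log π))) := by
    have h := hs2.sub (hs.const_mul 2)
    rw [show Real.log (Real.sqrt π) - 2 * Real.log (Real.sqrt π) = -((1/2) * Real.log π) by
      rw [Real.log_sqrt pi_pos.le]; ring] at h
    apply h.congr'
    filter_upwards [eventually_ge_atTop 1] with N hN
    rw [stirlog N hN]
  -- Gamma piece
  have hG : Tendsto (fun N : ℕ => Real.log (Real.GammaSeq x N)) atTop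
      (𝓝 (Real.log (Real.Gamma x))) :=
    (Real.continuousAt_log (Real.Gamma_pos_of_pos hx).ne').tendsto.comp
      (Real.GammaSeq_tendsto_Gamma x)
  -- log(x+N) - log N piece
  have hxN : Tendsto (fun N : ℕ => Real.log (x + N) - Real.log N) atTop (𝓝 0) := by
    have h1 : Tendsto (fun N : ℕ => 1 + x / N) atTop (𝓝 1) := by
      have : Tendsto (fun N : ℕ => x / N) atTop (𝓝 0) :=
        Tendsto.div_atTop tendsto_const_nhds tendsto_natCast_atTop_atTop
      simpa using tendsto_const_nhds.add this
    have h2 : Tendsto (fun N : ℕ => Real.log (1 + x / N)) atTop (𝓝 0) := by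
      have := (Real.continuousAt_log one_ne_zero).tendsto.comp h1
      simpa [Function.comp_def] using this
    apply h2.congr'
    filter_upwards [eventually_ge_atTop 1] with N hN
    have hNpos : (0:ℝ) < (N:ℝ) := by exact_mod_cast hN
    rw [show 1 + x / (N:ℝ) = (x + N) / N by field_simp; ring,
      Real.log_div (by positivity) hNpos.ne']
  -- harmonic pieces
  have hH := tendsto_Hsum_sub_log
  have hH2 : Tendsto (fun N : ℕ => Hsum (2 * N) - Real.log (2 * (N:ℝ))) atTop
      (𝓝 Real.eulerMascheroniConstant) := by
    have := hH.comp htwo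
    apply this.congr fun N => ?_
    simp only [Function.comp_apply]
    push_cast
    ring_nf
  -- assemble
  have hall := ((((hSt.add hG).add hxN).add
      (hH2.const_mul (2 * x ^ 2 - 2 * x + 1 / 2))).sub
      (hH.const_mul (2 * x ^ 2 - 3 * x + 1))).add
      (tendsto_const_nhds (x := (2 * x ^ 2 - 2 * x + 1 / 2) * Real.log 2))
  have hlim : -((1/2) * Real.log π) + Real.log (Real.Gamma x) + 0
      + (2 * x ^ 2 - 2 * x + 1 / 2) * Real.eulerMascheroniConstant
      - (2 * x ^ 2 - 3 * x + 1) * Real.eulerMascheroniConstant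
      + (2 * x ^ 2 - 2 * x + 1 / 2) * Real.log 2
      = Real.log (Real.Gamma x) + (x - 1 / 2) * Real.eulerMascheroniConstant
        + (2 * x ^ 2 - 2 * x + 1 / 2) * Real.log 2 - (1 / 2) * Real.log π := by ring
  rw [hlim] at hall
  apply hall.congr'
  filter_upwards [eventually_ge_atTop 1] with N hN
  rw [sum_T_closed x hx N hN]

lemma exp_sq (a : ℝ) : Real.exp a ^ 2 = Real.exp (a + a) := by
  rw [sq, ← Real.exp_add]

lemma key_tsum (x : ℝ) (hx : 0 < x) :
    (∑' n, fterm (2 * x - 1) n) - 2 * (∑' n, fterm (x - 1) n)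
      - 2 * (∑' n, fterm (x - 1 / 2) n) + 2 * (∑' n, fterm (-(1 / 2)) n)
    = Real.log (Real.Gamma x) + (x - 1 / 2) * Real.eulerMascheroniConstant
        + (2 * x ^ 2 - 2 * x + 1 / 2) * Real.log 2 - (1 / 2) * Real.log π := by
  have hA := (summable_fterm (2 * x - 1)).hasSum.tendsto_sum_nat
  have hA2 := hA.comp htwo
  have hB := (summable_fterm (x - 1)).hasSum.tendsto_sum_nat
  have hC := (summable_fterm (x - 1 / 2)).hasSum.tendsto_sum_nat
  have hD := (summable_fterm (-(1 / 2))).hasSum.tendsto_sum_nat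
  have combo := ((hA2.sub (hB.const_mul 2)).sub (hC.const_mul 2)).add (hD.const_mul 2)
  have heq : ∀ N : ℕ,
      ((∑ i ∈ Finset.range (2 * N), fterm (2 * x - 1) i)
        - 2 * ∑ i ∈ Finset.range N, fterm (x - 1) i)
        - 2 * (∑ i ∈ Finset.range N, fterm (x - 1 / 2) i)
        + 2 * (∑ i ∈ Finset.range N, fterm (-(1 / 2)) i)
      = ∑ n ∈ Finset.range N, Tterm x n := by
    intro N
    rw [sum_pair (fterm (2 * x - 1)) N, Finset.mul_sum, Finset.mul_sum, Finset.mul_sum,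
      ← Finset.sum_sub_distrib, ← Finset.sum_sub_distrib, ← Finset.sum_add_distrib]
    refine Finset.sum_congr rfl fun n _ => ?_
    have := Tkey x hx n
    rw [Tterm]
    linarith [this]
  exact tendsto_nhds_unique (combo.congr heq) (tendsto_sum_T x hx)

theorem doubleGamma_duplication (x : ℝ) (hx : 0 < x) :
    doubleGamma (2 * x) =
      (doubleGamma (1 / 2)) ⁻¹ ^ 2 * 2 ^ ((x - 1) * (2 * x - 1)) * π ^ (-x) *
        Real.Gamma x * doubleGamma x ^ 2 * doubleGamma (x + 1 / 2) ^ 2 := by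
  have h2x : (0:ℝ) < 2 * x := by linarith
  have hq : (0:ℝ) < x + 1 / 2 := by linarith
  have hhalf : (0:ℝ) < (1:ℝ) / 2 := by norm_num
  rw [doubleGamma_eq_exp (2 * x) h2x, doubleGamma_eq_exp x hx,
    doubleGamma_eq_exp (x + 1 / 2) hq, doubleGamma_eq_exp (1 / 2) hhalf]
  rw [show (1:ℝ) / 2 - 1 = -(1 / 2) by norm_num,
    show x + 1 / 2 - 1 = x - 1 / 2 by ring]
  rw [Real.rpow_def_of_pos two_pos ((x - 1) * (2 * x - 1)),
    Real.rpow_def_of_pos pi_pos (-x),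
    ← Real.exp_log (Real.Gamma_pos_of_pos hx),
    ← Real.exp_neg, exp_sq, exp_sq, exp_sq,
    ← Real.exp_add, ← Real.exp_add, ← Real.exp_add, ← Real.exp_add, ← Real.exp_add,
    Real.exp_eq_exp, Real.log_mul two_ne_zero pi_ne_zero]
  linear_combination key_tsum x hx
end

section
/- Alexeiewsky's theorem: for every real a > 0, ∫_0^a ln Γ(x) dx = − ln G(a) + (a−1)·ln Γ(a) − a(a−1)/2 + (a/2)·ln(2π). -/
open Real

namespace Alexei

open Filter MeasureTheory intervalIntegral Finset Real

local notation "γ" => Real.eulerMascheroniConstant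

noncomputable def f (m : ℕ) (x : ℝ) : ℝ := x / (m + 1) - Real.log (1 + x / (m + 1))

noncomputable def q (t : ℝ) (m : ℕ) : ℝ :=
  (m + 1 : ℝ) * Real.log (1 + t / (m + 1)) - t + t ^ 2 / (2 * (m + 1))

lemma f_nonneg {m : ℕ} {x : ℝ} (hx : 0 ≤ x) : 0 ≤ f m x := by
  have h1 : (0:ℝ) < 1 + x / (m + 1) := by positivity
  have := Real.log_le_sub_one_of_pos h1
  simp only [f]
  linarith

lemma f_measurable (m : ℕ) : Measurable (f m) := by
  exact (measurable_id.div_const _).sub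
    (Real.measurable_log.comp (measurable_const.add (measurable_id.div_const _)))

lemma f_partial_eq {x : ℝ} (hx : 0 < x) (N : ℕ) :
    ∑ m ∈ Finset.range N, f m x =
      Real.BohrMollerup.logGammaSeq x N + Real.log x + x * ((harmonic N : ℝ) - Real.log N) := by
  induction N with
  | zero =>
    simp [Real.BohrMollerup.logGammaSeq, harmonic]
  | succ N ih =>
    rw [Finset.sum_range_succ, ih, harmonic_succ]
    have hN1 : ((N : ℝ) + 1) ≠ 0 := by positivity
    have hfa : Real.BohrMollerup.logGammaSeq x (N + 1) =
        Real.BohrMollerup.logGammaSeq x N + x * Real.log (N + 1) - x * Real.log N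
          + Real.log (N + 1) - Real.log (x + (N + 1)) := by
      simp only [Real.BohrMollerup.logGammaSeq, Finset.sum_range_succ, Nat.factorial_succ]
      push_cast
      rw [Real.log_mul (by positivity) (by positivity : (N.factorial : ℝ) ≠ 0)]
      ring
    have hflog : Real.log (1 + x / (N + 1)) = Real.log (x + (N + 1)) - Real.log (N + 1) := by
      rw [show (1 : ℝ) + x / (N + 1) = (x + (N + 1)) / (N + 1) by field_simp; ring,
        Real.log_div (by positivity) hN1]
    simp only [f, hfa, hflog]
    push_cast
    field_simp
    ring

lemma tendsto_partial_f {x : ℝ} (hx : 0 ≤ x) :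
    Tendsto (fun N => ∑ m ∈ Finset.range N, f m x) atTop
      (nhds (Real.log (Real.Gamma (x + 1)) + γ * x)) := by
  rcases hx.eq_or_lt with h | hx
  · subst h
    have : ∀ N, ∑ m ∈ Finset.range N, f m 0 = 0 := fun N => by simp [f]
    simp only [Real.Gamma_one, Real.log_one, mul_zero, zero_add, this, add_zero]
    exact tendsto_const_nhds
  · have h1 := Real.BohrMollerup.tendsto_log_gamma hx
    have h2 := Real.tendsto_harmonic_sub_log
    have h3 : Tendsto (fun N : ℕ => Real.BohrMollerup.logGammaSeq x N + Real.log x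
        + x * ((harmonic N : ℝ) - Real.log N)) atTop
        (nhds (Real.log (Real.Gamma x) + Real.log x + x * γ)) :=
      (h1.add_const _).add (h2.const_mul x)
    have h4 : Real.log (Real.Gamma (x + 1)) + γ * x
        = Real.log (Real.Gamma x) + Real.log x + x * γ := by
      rw [Real.Gamma_add_one hx.ne', Real.log_mul hx.ne' (Real.Gamma_pos_of_pos hx).ne']
      ring
    rw [h4]
    exact h3.congr fun N => (f_partial_eq hx N).symm

lemma f_contOn (m : ℕ) {a : ℝ} (ha : 0 < a) : ContinuousOn (f m) (Set.uIcc 0 a) := by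
  have h : ∀ x ∈ Set.uIcc (0:ℝ) a, (1 : ℝ) + x / (m + 1) ≠ 0 := by
    intro x hx
    rw [Set.uIcc_of_le ha.le] at hx
    have : (0:ℝ) ≤ x := hx.1
    positivity
  exact (continuousOn_id.div_const _).sub
    ((continuousOn_const.add (continuousOn_id.div_const _)).log h)

lemma f_intble (m : ℕ) {a : ℝ} (ha : 0 < a) : IntervalIntegrable (f m) volume 0 a :=
  (f_contOn m ha).intervalIntegrable

lemma integral_f (m : ℕ) {a : ℝ} (ha : 0 < a) :
    ∫ x in (0:ℝ)..a, f m x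
      = a ^ 2 / (2 * (m + 1)) + a - (a + (m + 1)) * Real.log (1 + a / (m + 1)) := by
  set c : ℝ := (m : ℝ) + 1 with hc
  have hcpos : (0:ℝ) < c := by positivity
  have key : ∀ x ∈ Set.uIcc (0:ℝ) a, HasDerivAt
      (fun x => x ^ 2 / (2 * c) + x - (x + c) * Real.log (1 + x / c)) (f m x) x := by
    intro x hx
    rw [Set.uIcc_of_le ha.le] at hx
    have hx0 : (0:ℝ) ≤ x := hx.1
    have hpos : (0:ℝ) < 1 + x / c := by positivity
    have h1 : HasDerivAt (fun x : ℝ => 1 + x / c) (1 / c) x := by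
      simpa using ((hasDerivAt_id x).div_const c).const_add 1
    have h2 : HasDerivAt (fun x : ℝ => Real.log (1 + x / c)) (1 / c / (1 + x / c)) x :=
      h1.log hpos.ne'
    have h3 : HasDerivAt (fun x : ℝ => (x + c) * Real.log (1 + x / c))
        (1 * Real.log (1 + x / c) + (x + c) * (1 / c / (1 + x / c))) x :=
      ((hasDerivAt_id x).add_const c).mul h2
    have h4 : HasDerivAt (fun x : ℝ => x ^ 2 / (2 * c) + x)
        (2 * x / (2 * c) + 1) x := by
      simpa using (((hasDerivAt_pow 2 x)).div_const (2 * c)).fun_add (hasDerivAt_id' x)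
    have := h4.fun_sub h3
    refine this.congr_deriv ?_
    have hne : c + x ≠ 0 := by positivity
    simp only [f]
    field_simp
    ring
  rw [integral_eq_sub_of_hasDerivAt key (f_intble m ha)]
  have h0 : (1 : ℝ) + 0 / c = 1 := by ring
  simp only [h0, Real.log_one, mul_zero, ne_eq]
  ring

lemma summable_q (t : ℝ) : Summable (q t) := by
  have hb : Summable (fun m : ℕ => 2 * |t| ^ 3 * (1 / ((m:ℝ) + 1) ^ 2)) := by
    apply Summable.mul_left
    have := Real.summable_one_div_nat_pow.mpr (le_refl 2)
    exact_mod_cast (summable_nat_add_iff 1).mpr this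
  apply Summable.of_norm_bounded_eventually hb
  rw [Nat.cofinite_eq_atTop]
  filter_upwards [eventually_ge_atTop (⌈2 * |t|⌉₊)] with m hm
  set c : ℝ := (m : ℝ) + 1 with hc
  have hcpos : (0:ℝ) < c := by positivity
  have hmc : 2 * |t| ≤ c := by
    calc 2 * |t| ≤ (⌈2 * |t|⌉₊ : ℝ) := Nat.le_ceil _
    _ ≤ (m : ℝ) := by exact_mod_cast hm
    _ ≤ c := by simp [hc]
  set u : ℝ := t / c with hu
  have hu2 : |u| ≤ 1 / 2 := by
    rw [hu, abs_div, abs_of_pos hcpos, div_le_iff₀ hcpos]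
    linarith
  have hu1 : |u| < 1 := lt_of_le_of_lt hu2 (by norm_num)
  have hb1 : |(-u)| < 1 := by rwa [abs_neg]
  have key := Real.abs_log_sub_add_sum_range_le hb1 2
  have hsum : ∑ i ∈ Finset.range 2, (-u) ^ (i + 1) / ((i:ℝ) + 1) = -u + u ^ 2 / 2 := by
    simp [Finset.sum_range_succ]
    ring
  rw [hsum, show (1 : ℝ) - -u = 1 + u by ring] at key
  have habs : |u| ^ (2 + 1) / (1 - |(-u)|) ≤ 2 * |u| ^ 3 := by
    rw [abs_neg]
    rw [div_le_iff₀ (by linarith : (0:ℝ) < 1 - |u|)]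
    have h3 : |u| ^ (2+1) = |u| ^ 3 := by norm_num
    rw [h3]
    nlinarith [mul_nonneg (by positivity : (0:ℝ) ≤ |u|^3) (by linarith : (0:ℝ) ≤ 1 - 2*|u|)]
  rw [abs_neg] at key
  have hq : q t m = c * (Real.log (1 + u) - u + u ^ 2 / 2) := by
    simp only [q, hu, hc]
    field_simp
  rw [Real.norm_eq_abs, hq, abs_mul, abs_of_pos hcpos]
  have : |Real.log (1 + u) - u + u ^ 2 / 2| ≤ 2 * |u| ^ 3 := by
    calc |Real.log (1 + u) - u + u ^ 2 / 2| = |(-u + u^2/2) + Real.log (1+u)| := by ring_nf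
    _ ≤ |u| ^ (2+1) / (1 - |u|) := key
    _ ≤ 2 * |u| ^ 3 := by rw [← abs_neg u] at habs ⊢; simpa using habs
  calc c * |Real.log (1 + u) - u + u ^ 2 / 2| ≤ c * (2 * |u| ^ 3) := by
        exact mul_le_mul_of_nonneg_left this hcpos.le
  _ = 2 * |t| ^ 3 * (1 / c ^ 2) := by
        rw [hu, abs_div, abs_of_pos hcpos, div_pow]
        field_simp
  _ = 2 * |t| ^ 3 * (1 / ((m:ℝ) + 1) ^ 2) := by rw [hc]

lemma contOn_L {a : ℝ} (ha : 0 < a) :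
    ContinuousOn (fun x => Real.log (Real.Gamma (x + 1)) + γ * x) (Set.uIcc 0 a) := by
  apply ContinuousOn.add _ (continuousOn_const.mul continuousOn_id)
  rw [Set.uIcc_of_le ha.le]
  intro x hx
  have hx1 : (0:ℝ) < x + 1 := by linarith [hx.1]
  apply ContinuousAt.continuousWithinAt
  have hG : ContinuousAt Real.Gamma (x + 1) := by
    apply (Real.differentiableAt_Gamma ?_).continuousAt
    intro m h
    have hm : -(m:ℝ) ≤ 0 := by simp [Nat.cast_nonneg]
    rw [h] at hx1; linarith
  have h2' : ContinuousAt (Real.Gamma ∘ (fun y : ℝ => y + 1)) x :=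
    ContinuousAt.comp hG (continuousAt_id.add continuousAt_const)
  have h2 : ContinuousAt (fun y : ℝ => Real.Gamma (y + 1)) x := h2'
  exact h2.log (Real.Gamma_pos_of_pos hx1).ne'

lemma tendsto_integral_partial {a : ℝ} (ha : 0 < a) :
    Tendsto (fun N => ∑ m ∈ Finset.range N,
        (a ^ 2 / (2 * (m + 1)) + a - (a + (m + 1)) * Real.log (1 + a / (m + 1)))) atTop
      (nhds (∫ x in (0:ℝ)..a, (Real.log (Real.Gamma (x + 1)) + γ * x))) := by
  have hmain : Tendsto (fun N => ∫ x in (0:ℝ)..a, ∑ m ∈ Finset.range N, f m x) atTop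
      (nhds (∫ x in (0:ℝ)..a, (Real.log (Real.Gamma (x + 1)) + γ * x))) := by
    apply intervalIntegral.tendsto_integral_filter_of_dominated_convergence
      (bound := fun x => Real.log (Real.Gamma (x + 1)) + γ * x)
    · filter_upwards with N
      exact (Finset.measurable_sum _ (fun m _ => f_measurable m)).aestronglyMeasurable
    · filter_upwards with N
      filter_upwards with x hx
      rw [Set.uIoc_of_le ha.le] at hx
      have hx0 : (0:ℝ) ≤ x := hx.1.le
      have hnn : 0 ≤ ∑ m ∈ Finset.range N, f m x :=
        Finset.sum_nonneg fun m _ => f_nonneg hx0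
      rw [Real.norm_eq_abs, abs_of_nonneg hnn]
      have hmono : Monotone (fun N => ∑ m ∈ Finset.range N, f m x) := by
        intro i j hij
        exact Finset.sum_le_sum_of_subset_of_nonneg (Finset.range_subset_range.mpr hij)
          (fun m _ _ => f_nonneg hx0)
      exact hmono.ge_of_tendsto (tendsto_partial_f hx0) N
    · exact (contOn_L ha).intervalIntegrable
    · filter_upwards with x hx
      rw [Set.uIoc_of_le ha.le] at hx
      exact tendsto_partial_f hx.1.le
  have heq : ∀ N, ∫ x in (0:ℝ)..a, ∑ m ∈ Finset.range N, f m x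
      = ∑ m ∈ Finset.range N,
        (a ^ 2 / (2 * (m + 1)) + a - (a + (m + 1)) * Real.log (1 + a / (m + 1))) := by
    intro N
    rw [intervalIntegral.integral_finset_sum (fun m _ => f_intble m ha)]
    exact Finset.sum_congr rfl fun m _ => integral_f m ha
  exact (hmain.congr heq)

lemma telescoped {a : ℝ} (ha : 0 < a) (N : ℕ) :
    ∑ m ∈ Finset.range N,
      ((a ^ 2 / (2 * (m + 1)) + a - (a + (m + 1)) * Real.log (1 + a / (m + 1)))
        + q (a - 1) m - (a - 1) * f m a)
      = N + (harmonic N : ℝ) / 2 + Real.log a + Real.log (N.factorial)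
          - (N + 1) * Real.log (N + a) := by
  induction N with
  | zero => simp [harmonic]
  | succ N ih =>
    rw [Finset.sum_range_succ, ih, harmonic_succ]
    set k : ℝ := (N : ℝ) + 1 with hk
    have hkpos : (0:ℝ) < k := by positivity
    have hka : (0:ℝ) < k + a := by linarith
    have hNa : (0:ℝ) < (N:ℝ) + a := by positivity
    have hla : Real.log (1 + a / k) = Real.log (k + a) - Real.log k := by
      rw [show (1:ℝ) + a / k = (k + a) / k by field_simp, Real.log_div hka.ne' hkpos.ne']
    have hlt : Real.log (1 + (a - 1) / k) = Real.log ((N:ℝ) + a) - Real.log k := by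
      rw [show (1:ℝ) + (a - 1) / k = ((N:ℝ) + a) / k by rw [hk]; field_simp; ring,
        Real.log_div hNa.ne' hkpos.ne']
    have hfact : Real.log ((N + 1).factorial) = Real.log (N.factorial) + Real.log k := by
      rw [Nat.factorial_succ]
      push_cast
      rw [Real.log_mul (by positivity) (by positivity)]
      ring
    simp only [q, f, hla, hlt, hfact]
    push_cast
    simp only [← hk, hla, hlt]
    field_simp
    ring

lemma tendsto_closed {a : ℝ} (ha : 0 < a) :
    Tendsto (fun N : ℕ => (N : ℝ) + (harmonic N : ℝ) / 2 + Real.log a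
        + Real.log (N.factorial) - (N + 1) * Real.log (N + a)) atTop
      (nhds (Real.log a + Real.log (2 * π) / 2 + γ / 2 - a)) := by
  -- the auxiliary explicit expression
  have hstir : Tendsto (fun N : ℕ => Real.log (Stirling.stirlingSeq N)) atTop
      (nhds (Real.log (Real.sqrt π))) :=
    (Stirling.tendsto_stirlingSeq_sqrt_pi.log (by positivity))
  have hgam := Real.tendsto_harmonic_sub_log
  have hlog1 : Tendsto (fun N : ℕ => ((N:ℝ)) * Real.log (1 + a / N)) atTop (nhds a) := by
    exact (tendsto_mul_log_one_add_div_atTop a).comp tendsto_natCast_atTop_atTop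
  have hlog2 : Tendsto (fun N : ℕ => Real.log (1 + a / N)) atTop (nhds 0) := by
    have h1 : Tendsto (fun N : ℕ => 1 + a / (N:ℝ)) atTop (nhds 1) := by
      simpa using (tendsto_const_nhds (x := (1:ℝ))).add
        ((tendsto_const_nhds (x := a)).div_atTop tendsto_natCast_atTop_atTop)
    simpa [Real.log_one] using (h1.log (by norm_num))
  have hcomb : Tendsto (fun N : ℕ => Real.log a + Real.log (Stirling.stirlingSeq N)
      + Real.log 2 / 2 + ((harmonic N : ℝ) - Real.log N) / 2
      - ((N:ℝ) * Real.log (1 + a / N) + Real.log (1 + a / N))) atTop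
      (nhds (Real.log a + Real.log (Real.sqrt π) + Real.log 2 / 2 + γ / 2 - (a + 0))) := by
    exact ((((tendsto_const_nhds.add hstir).add tendsto_const_nhds).add
      (hgam.div_const 2)).sub (hlog1.add hlog2))
  have hfinal : Real.log a + Real.log (Real.sqrt π) + Real.log 2 / 2 + γ / 2 - (a + 0)
      = Real.log a + Real.log (2 * π) / 2 + γ / 2 - a := by
    rw [Real.log_mul (by norm_num) (by positivity), Real.log_sqrt (by positivity)]
    ring
  rw [← hfinal]
  apply hcomb.congr'
  filter_upwards [eventually_ge_atTop 1] with N hN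
  have hN0 : (0:ℝ) < (N:ℝ) := by exact_mod_cast hN
  have hNa : (0:ℝ) < (N:ℝ) + a := by linarith
  have hstirF := Stirling.log_stirlingSeq_formula N
  have hlogdiv : Real.log ((N:ℝ) / Real.exp 1) = Real.log N - 1 := by
    rw [Real.log_div hN0.ne' (Real.exp_ne_zero 1), Real.log_exp]
  have hlog2N : Real.log (2 * (N:ℝ)) = Real.log 2 + Real.log N :=
    Real.log_mul (by norm_num) hN0.ne'
  have hlogNa : Real.log (1 + a / N) = Real.log ((N:ℝ) + a) - Real.log N := by
    rw [show (1:ℝ) + a / N = ((N:ℝ) + a) / N by field_simp, Real.log_div hNa.ne' hN0.ne']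
  rw [hstirF, hlogdiv, hlog2N, hlogNa] at *
  ring

lemma key {a : ℝ} (ha : 0 < a) :
    (∫ x in (0:ℝ)..a, (Real.log (Real.Gamma (x + 1)) + γ * x)) + (∑' m, q (a - 1) m)
        - (a - 1) * (Real.log (Real.Gamma (a + 1)) + γ * a)
      = Real.log a + Real.log (2 * π) / 2 + γ / 2 - a := by
  have h1 := tendsto_integral_partial ha
  have h2 := (summable_q (a - 1)).hasSum.tendsto_sum_nat
  have h3 := (tendsto_partial_f ha.le).const_mul (a - 1)
  have hcomb := (h1.add h2).sub h3
  have heq : ∀ N : ℕ, (∑ m ∈ Finset.range N,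
        (a ^ 2 / (2 * (m + 1)) + a - (a + (m + 1)) * Real.log (1 + a / (m + 1)))
      + ∑ m ∈ Finset.range N, q (a - 1) m)
      - (a - 1) * ∑ m ∈ Finset.range N, f m a
      = ∑ m ∈ Finset.range N,
        ((a ^ 2 / (2 * (m + 1)) + a - (a + (m + 1)) * Real.log (1 + a / (m + 1)))
          + q (a - 1) m - (a - 1) * f m a) := by
    intro N
    rw [Finset.mul_sum, ← Finset.sum_add_distrib, ← Finset.sum_sub_distrib]
  have hcomb2 : Tendsto (fun N : ℕ => (N : ℝ) + (harmonic N : ℝ) / 2 + Real.log a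
      + Real.log (N.factorial) - (N + 1) * Real.log (N + a)) atTop
      (nhds ((∫ x in (0:ℝ)..a, (Real.log (Real.Gamma (x + 1)) + γ * x)) + (∑' m, q (a - 1) m)
        - (a - 1) * (Real.log (Real.Gamma (a + 1)) + γ * a))) := by
    apply hcomb.congr
    intro N
    rw [heq N, telescoped ha N]
  exact tendsto_nhds_unique hcomb2 (tendsto_closed ha)

lemma log_doubleGamma {a : ℝ} (ha : 0 < a) :
    Real.log (doubleGamma a)
      = (a - 1) / 2 * Real.log (2 * π) + (-(a - 1) * a / 2 - γ * (a - 1) ^ 2 / 2)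
          + ∑' m, q (a - 1) m := by
  set t : ℝ := a - 1 with ht
  have ht1 : -1 < t := by simp [ht]; linarith
  have hterm : ∀ m : ℕ, ((1 : ℝ) + t / (m + 1)) ^ (m + 1) *
      Real.exp (-t + t ^ 2 / (2 * (m + 1))) = Real.exp (q t m) := by
    intro m
    have hpos : (0:ℝ) < 1 + t / ((m:ℝ) + 1) := by
      have : -1 < t / ((m:ℝ)+1) := by
        rw [lt_div_iff₀ (by positivity : (0:ℝ) < (m:ℝ)+1)]
        nlinarith [Nat.cast_nonneg (α := ℝ) m]
      linarith
    have hpos' : (0:ℝ) < 1 + t / ((m + 1 : ℕ) : ℝ) := by push_cast; exact hpos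
    have h1 : ((1 : ℝ) + t / ((m + 1 : ℕ) : ℝ)) ^ (m + 1)
        = Real.exp (((m + 1 : ℕ) : ℝ) * Real.log (1 + t / ((m + 1 : ℕ) : ℝ))) := by
      rw [Real.exp_nat_mul, Real.exp_log hpos']
    push_cast at h1
    rw [h1, ← Real.exp_add]
    congr 1
    simp only [q]
    ring
  have hprod : HasProd (fun m : ℕ => ((1 : ℝ) + t / (m + 1)) ^ (m + 1) *
      Real.exp (-t + t ^ 2 / (2 * (m + 1)))) (Real.exp (∑' m, q t m)) := by
    have h := (summable_q t).hasSum.rexp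
    have hfun : (rexp ∘ q t) = fun m : ℕ => ((1 : ℝ) + t / (m + 1)) ^ (m + 1) *
        Real.exp (-t + t ^ 2 / (2 * (m + 1))) :=
      funext fun m => by rw [Function.comp_apply, hterm m]
    rwa [hfun] at h
  have hrpow : (2 * π) ^ (t / 2) = Real.exp (t / 2 * Real.log (2 * π)) := by
    rw [Real.rpow_def_of_pos (by positivity), mul_comm]
  rw [show doubleGamma a = (2 * π) ^ (t / 2) *
      Real.exp (-t * a / 2 - γ * t ^ 2 / 2) *
      ∏' m : ℕ, (((1 : ℝ) + t / (m + 1)) ^ (m + 1) *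
        Real.exp (-t + t ^ 2 / (2 * (m + 1)))) from rfl]
  rw [hprod.tprod_eq, hrpow, ← Real.exp_add, ← Real.exp_add, Real.log_exp]

lemma intervalIntegrable_log' {a : ℝ} (ha : 0 < a) :
    IntervalIntegrable Real.log volume 0 a := by
  rw [intervalIntegrable_iff_integrableOn_Ioc_of_le ha.le]
  have hg : IntegrableOn (fun x : ℝ => 2 * x ^ (-(1:ℝ)/2) + a) (Set.Ioc 0 a) volume := by
    have h1 : IntervalIntegrable (fun x : ℝ => x ^ (-(1:ℝ)/2)) volume 0 a :=
      intervalIntegral.intervalIntegrable_rpow' (by norm_num)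
    rw [intervalIntegrable_iff_integrableOn_Ioc_of_le ha.le] at h1
    exact (h1.const_mul 2).add (integrableOn_const measure_Ioc_lt_top.ne)
  apply hg.integrable.mono
  · exact Real.measurable_log.aestronglyMeasurable
  · rw [ae_restrict_iff' measurableSet_Ioc]
    filter_upwards with x hx
    obtain ⟨hx0, hxa⟩ := hx
    have hrp : (0:ℝ) < x ^ (-(1:ℝ)/2) := Real.rpow_pos_of_pos hx0 _
    rw [Real.norm_eq_abs, Real.norm_eq_abs]
    rw [abs_of_pos (by positivity : (0:ℝ) < 2 * x ^ (-(1:ℝ)/2) + a)]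
    rcases le_or_gt x 1 with h1 | h1
    · have hlogle : -Real.log x ≤ 2 * x ^ (-(1:ℝ)/2) := by
        have h2 : Real.log (x ^ (-(1:ℝ)/2)) = (-(1:ℝ)/2) * Real.log x := Real.log_rpow hx0 _
        have h3 : Real.log (x ^ (-(1:ℝ)/2)) ≤ x ^ (-(1:ℝ)/2) - 1 :=
          Real.log_le_sub_one_of_pos hrp
        nlinarith
      have hlognp : Real.log x ≤ 0 := Real.log_nonpos hx0.le h1
      rw [abs_of_nonpos hlognp]
      linarith
    · have hlognn : 0 ≤ Real.log x := Real.log_nonneg h1.le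
      rw [abs_of_nonneg hlognn]
      have := Real.log_le_sub_one_of_pos hx0
      linarith

lemma integral_log' {a : ℝ} (ha : 0 < a) :
    ∫ x in (0:ℝ)..a, Real.log x = a * Real.log a - a := by
  have hF : ContinuousOn (fun x : ℝ => x * Real.log x - x) (Set.Icc 0 a) :=
    (Real.continuous_mul_log.sub continuous_id).continuousOn
  have hderiv : ∀ x ∈ Set.Ioo (0:ℝ) a, HasDerivWithinAt
      (fun x : ℝ => x * Real.log x - x) (Real.log x) (Set.Ioi x) x := by
    intro x hx
    have h := (Real.hasDerivAt_mul_log hx.1.ne').fun_sub (hasDerivAt_id' x)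
    simpa using h.hasDerivWithinAt
  have := intervalIntegral.integral_eq_sub_of_hasDeriv_right_of_le ha.le hF hderiv
    (intervalIntegrable_log' ha)
  rw [this]
  simp

lemma integrable_logGamma_succ {a : ℝ} (ha : 0 < a) :
    IntervalIntegrable (fun x => Real.log (Real.Gamma (x + 1))) volume 0 a := by
  have := (contOn_L ha).sub ((continuousOn_const (c := γ)).mul continuousOn_id)
  have h2 : ContinuousOn (fun x : ℝ => Real.log (Real.Gamma (x + 1))) (Set.uIcc 0 a) := by
    apply this.congr
    intro x _
    simp
  exact h2.intervalIntegrable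

lemma integral_logGamma {a : ℝ} (ha : 0 < a) :
    ∫ x in (0:ℝ)..a, Real.log (Real.Gamma x)
      = (∫ x in (0:ℝ)..a, Real.log (Real.Gamma (x + 1))) - (a * Real.log a - a) := by
  have hcongr : ∫ x in (0:ℝ)..a, Real.log (Real.Gamma x)
      = ∫ x in (0:ℝ)..a, (Real.log (Real.Gamma (x + 1)) - Real.log x) := by
    apply intervalIntegral.integral_congr_ae
    filter_upwards with x hx
    rw [Set.uIoc_of_le ha.le] at hx
    have hx0 : (0:ℝ) < x := hx.1
    rw [Real.Gamma_add_one hx0.ne', Real.log_mul hx0.ne' (Real.Gamma_pos_of_pos hx0).ne']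
    ring
  rw [hcongr, intervalIntegral.integral_sub (integrable_logGamma_succ ha)
    (intervalIntegrable_log' ha), integral_log' ha]

lemma integral_L {a : ℝ} (ha : 0 < a) :
    ∫ x in (0:ℝ)..a, (Real.log (Real.Gamma (x + 1)) + γ * x)
      = (∫ x in (0:ℝ)..a, Real.log (Real.Gamma (x + 1))) + γ * (a ^ 2 / 2) := by
  have hid : IntervalIntegrable (fun x : ℝ => γ * x) volume 0 a :=
    Continuous.intervalIntegrable (by continuity) 0 a
  rw [intervalIntegral.integral_add (integrable_logGamma_succ ha) hid]
  rw [intervalIntegral.integral_const_mul]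
  rw [integral_id]
  ring

end Alexei

theorem alexeiewsky_theorem (a : ℝ) (ha : 0 < a) :
    ∫ x in (0 : ℝ)..a, Real.log (Real.Gamma x) =
      -Real.log (doubleGamma a) + (a - 1) * Real.log (Real.Gamma a) -
        a * (a - 1) / 2 + a / 2 * Real.log (2 * π) := by
  have hE := Alexei.key ha
  have hG := Alexei.log_doubleGamma ha
  have h1 := Alexei.integral_logGamma ha
  have h2 := Alexei.integral_L ha
  have hGa : Real.log (Real.Gamma a) = Real.log (Real.Gamma (a + 1)) - Real.log a := by
    rw [Real.Gamma_add_one ha.ne', Real.log_mul ha.ne' (Real.Gamma_pos_of_pos ha).ne']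
    ring
  rw [h1, hGa, hG]
  rw [h2] at hE
  linear_combination hE
end

section
/- For every real x with 0 < x < 1, ∫_0^x π t · cot(πt) dt = x · ln(2π) + ln( G(1−x)/G(1+x) ). -/
open Real Filter MeasureTheory Set

namespace DG

/-- log of the n-th Weierstrass factor at parameter y -/
noncomputable def la (y : ℝ) (n : ℕ) : ℝ :=
  (n + 1 : ℝ) * Real.log (1 + y / (n + 1)) - y + y ^ 2 / (2 * (n + 1))

lemma one_add_div_pos {y : ℝ} (hy : |y| < 1) (n : ℕ) : 0 < 1 + y / (n + 1 : ℝ) := by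
  have hn : (1 : ℝ) ≤ (n : ℝ) + 1 := by
    have : (0:ℝ) ≤ n := Nat.cast_nonneg n
    linarith
  have : |y / ((n : ℝ) + 1)| < 1 := by
    rw [abs_div, abs_of_pos (by positivity : (0:ℝ) < (n:ℝ)+1)]
    calc |y| / ((n:ℝ)+1) ≤ |y| / 1 := by
            apply div_le_div_of_nonneg_left (abs_nonneg y) one_pos hn
      _ < 1 := by simpa using hy
  linarith [neg_lt_of_abs_lt this]

lemma la_log_eq {y : ℝ} (hy : |y| < 1) (n : ℕ) :
    Real.log ((1 + y / (n + 1 : ℝ)) ^ (n + 1) *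
      Real.exp (-y + y ^ 2 / (2 * (n + 1)))) = la y n := by
  have h1 : (0:ℝ) < 1 + y / (n + 1 : ℝ) := one_add_div_pos hy n
  rw [Real.log_mul (by positivity) (Real.exp_ne_zero _), Real.log_pow, Real.log_exp, la]
  push_cast
  ring

lemma abs_la_le {y : ℝ} (hy : |y| < 1) (n : ℕ) :
    |la y n| ≤ |y| ^ 3 / (1 - |y|) / (n + 1 : ℝ) ^ 2 := by
  have hn1 : (1:ℝ) ≤ (n:ℝ) + 1 := by
    have : (0:ℝ) ≤ n := Nat.cast_nonneg n
    linarith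
  have hn0 : (0:ℝ) < (n:ℝ) + 1 := by linarith
  set u : ℝ := -y / ((n:ℝ) + 1) with hu
  have hau : |u| ≤ |y| := by
    rw [hu, abs_div, abs_neg, abs_of_pos hn0]
    calc |y| / ((n:ℝ)+1) ≤ |y| / 1 := div_le_div_of_nonneg_left (abs_nonneg y) one_pos hn1
      _ = |y| := div_one _
  have hu1 : |u| < 1 := lt_of_le_of_lt hau hy
  have key := abs_log_sub_add_sum_range_le hu1 2
  have hsum : (∑ i ∈ Finset.range 2, u ^ (i+1) / (i+1)) = u + u^2/2 := by
    simp [Finset.sum_range_succ]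
    ring
  rw [hsum] at key
  have h1u : (1 : ℝ) - u = 1 + y / ((n:ℝ)+1) := by rw [hu]; ring
  have hla : la y n = ((n:ℝ)+1) * (u + u^2/2 + Real.log (1 - u)) := by
    rw [la, h1u, hu]
    field_simp
    ring
  have habs : |la y n| ≤ ((n:ℝ)+1) * (|u|^3 / (1 - |u|)) := by
    rw [hla, abs_mul, abs_of_pos hn0]
    exact mul_le_mul_of_nonneg_left key (le_of_lt hn0)
  refine habs.trans ?_
  have hyu : |u|^3 ≤ |y|^3 / ((n:ℝ)+1)^3 := by
    rw [hu, abs_div, abs_neg, abs_of_pos hn0, div_pow]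
  have hden : 1 - |y| ≤ 1 - |u| := by linarith
  have h1y : (0:ℝ) < 1 - |y| := by linarith
  have h1u' : (0:ℝ) < 1 - |u| := by linarith
  calc ((n:ℝ)+1) * (|u|^3 / (1 - |u|))
      ≤ ((n:ℝ)+1) * ((|y|^3 / ((n:ℝ)+1)^3) / (1 - |y|)) := by
        apply mul_le_mul_of_nonneg_left _ (le_of_lt hn0)
        apply div_le_div₀ (by positivity) hyu h1y hden
    _ = |y| ^ 3 / (1 - |y|) / ((n:ℝ) + 1) ^ 2 := by
        field_simp

lemma summable_la {y : ℝ} (hy : |y| < 1) : Summable (la y) := by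
  have : Summable (fun n : ℕ => |y| ^ 3 / (1 - |y|) / (n + 1 : ℝ) ^ 2) := by
    apply Summable.mul_left
    have := (summable_nat_add_iff 1).2 (Real.summable_one_div_nat_pow.2 one_lt_two)
    simpa [one_div] using this
  exact Summable.of_norm_bounded this (fun n => abs_la_le hy n)

lemma tprod_eq {y : ℝ} (hy : |y| < 1) :
    (∏' n : ℕ, ((1 + y / (n + 1 : ℝ)) ^ (n + 1) * Real.exp (-y + y ^ 2 / (2 * (n + 1))))) =
      Real.exp (∑' n, la y n) := by
  have hp := (summable_la hy).hasSum.rexp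
  have heq : (Real.exp ∘ la y) =
      fun n : ℕ => (1 + y / (n + 1 : ℝ)) ^ (n + 1) * Real.exp (-y + y ^ 2 / (2 * (n + 1))) := by
    funext n
    have h1 := one_add_div_pos hy n
    rw [Function.comp_apply, ← la_log_eq hy n, Real.exp_log (by positivity)]
  rw [heq] at hp
  exact hp.tprod_eq

lemma doubleGamma_eq {y : ℝ} (hy : |y| < 1) :
    doubleGamma (1 + y) =
      Real.exp (y / 2 * Real.log (2 * π)
        + (-y * (1 + y) / 2 - Real.eulerMascheroniConstant * y ^ 2 / 2)
        + ∑' n, la y n) := by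
  have h2π : (0:ℝ) < 2*π := by positivity
  rw [doubleGamma]
  simp only [add_sub_cancel_left]
  rw [tprod_eq hy, Real.rpow_def_of_pos h2π, ← Real.exp_add, ← Real.exp_add]
  congr 1
  ring

lemma la_sub {x : ℝ} (hx0 : 0 < x) (hx1 : x < 1) (n : ℕ) :
    la (-x) n - la x n =
      2 * x + ((n:ℝ) + 1) * (Real.log ((n:ℝ) + 1 - x) - Real.log ((n:ℝ) + 1 + x)) := by
  have hn1 : (1:ℝ) ≤ (n:ℝ) + 1 := by
    have : (0:ℝ) ≤ n := Nat.cast_nonneg n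
    linarith
  have hn0 : (0:ℝ) < (n:ℝ) + 1 := by linarith
  have hm : (0:ℝ) < (n:ℝ) + 1 - x := by linarith
  have hp : (0:ℝ) < (n:ℝ) + 1 + x := by linarith
  have h1 : 1 + (-x) / ((n:ℝ)+1) = ((n:ℝ)+1-x) / ((n:ℝ)+1) := by field_simp; ring
  have h2 : 1 + x / ((n:ℝ)+1) = ((n:ℝ)+1+x) / ((n:ℝ)+1) := by field_simp
  rw [la, la, h1, h2, Real.log_div (ne_of_gt hm) (ne_of_gt hn0),
    Real.log_div (ne_of_gt hp) (ne_of_gt hn0)]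
  ring

lemma rhs_eq {x : ℝ} (hx0 : 0 < x) (hx1 : x < 1) :
    x * Real.log (2 * π) + Real.log (doubleGamma (1 - x) / doubleGamma (1 + x)) =
      x + ∑' n : ℕ, (2 * x + ((n:ℝ) + 1) * (Real.log ((n:ℝ) + 1 - x) - Real.log ((n:ℝ) + 1 + x))) := by
  have hax : |x| < 1 := by rw [abs_of_pos hx0]; exact hx1
  have hax' : |(-x)| < 1 := by rwa [abs_neg]
  have h1x : (1:ℝ) - x = 1 + (-x) := by ring
  rw [h1x, doubleGamma_eq hax', doubleGamma_eq hax, ← Real.exp_sub, Real.log_exp]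
  have hsub : (∑' n, la (-x) n) - (∑' n, la x n) = ∑' n, (la (-x) n - la x n) :=
    ((summable_la hax').hasSum.sub (summable_la hax).hasSum).tsum_eq.symm
  have hterm : (∑' n, (la (-x) n - la x n)) =
      ∑' n : ℕ, (2 * x + ((n:ℝ) + 1) * (Real.log ((n:ℝ) + 1 - x) - Real.log ((n:ℝ) + 1 + x))) := by
    congr 1
    funext n
    exact la_sub hx0 hx1 n
  rw [← hterm, ← hsub]
  ring

lemma factor_pos {t : ℝ} (h1 : |t| < 1) (n : ℕ) : 0 < 1 - t^2/((n:ℝ)+1)^2 := by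
  have hn1 : (1:ℝ) ≤ (n:ℝ) + 1 := by
    have : (0:ℝ) ≤ n := Nat.cast_nonneg n
    linarith
  have ht2 : t^2 < 1 := by
    have := abs_lt.1 h1
    nlinarith [this.1, this.2]
  have hn2 : (1:ℝ) ≤ ((n:ℝ)+1)^2 := by nlinarith
  have : t^2/((n:ℝ)+1)^2 ≤ t^2 := by
    rw [div_le_iff₀ (by positivity)]
    nlinarith [sq_nonneg t]
  linarith

lemma summable_log_factor {t : ℝ} (h1 : |t| < 1) :
    Summable (fun n : ℕ => Real.log (1 - t^2/((n:ℝ)+1)^2)) := by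
  have ht2 : t^2 < 1 := by
    have := abs_lt.1 h1
    nlinarith [this.1, this.2]
  have hbound : ∀ n : ℕ, ‖Real.log (1 - t^2/((n:ℝ)+1)^2)‖ ≤
      (t^2/(1-t^2)) / ((n:ℝ)+1)^2 := by
    intro n
    have hn1 : (1:ℝ) ≤ (n:ℝ) + 1 := by
      have : (0:ℝ) ≤ n := Nat.cast_nonneg n
      linarith
    have hn0 : (0:ℝ) < (n:ℝ)+1 := by linarith
    have hn2 : (1:ℝ) ≤ ((n:ℝ)+1)^2 := by nlinarith
    set u : ℝ := t^2/((n:ℝ)+1)^2 with hu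
    have hu0 : 0 ≤ u := by positivity
    have hut : u ≤ t^2 := by
      rw [hu, div_le_iff₀ (by positivity)]
      nlinarith [sq_nonneg t]
    have hu1 : |u| < 1 := by
      rw [abs_of_nonneg hu0]; linarith
    have key := abs_log_sub_add_sum_range_le hu1 0
    simp only [Finset.range_zero, Finset.sum_empty, zero_add, pow_one] at key
    rw [Real.norm_eq_abs]
    refine key.trans ?_
    rw [abs_of_nonneg hu0]
    have h1t2 : (0:ℝ) < 1 - t^2 := by linarith
    calc u/(1-u) ≤ u/(1-t^2) :=
          div_le_div_of_nonneg_left hu0 h1t2 (by linarith)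
      _ = t^2/(1-t^2)/((n:ℝ)+1)^2 := by rw [hu]; ring
  refine Summable.of_norm_bounded ?_ hbound
  apply Summable.mul_left
  have := (summable_nat_add_iff 1).2 (Real.summable_one_div_nat_pow.2 one_lt_two)
  simpa [one_div] using this

lemma hasSum_log_factor {t : ℝ} (h0 : 0 < t) (h1 : t < 1) :
    HasSum (fun n : ℕ => Real.log (1 - t^2/((n:ℝ)+1)^2))
      (Real.log (Real.sin (π*t) / (π*t))) := by
  have hat : |t| < 1 := by rw [abs_of_pos h0]; exact h1
  have hπt : (0:ℝ) < π*t := by positivity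
  have hsin : (0:ℝ) < Real.sin (π*t) :=
    Real.sin_pos_of_pos_of_lt_pi hπt (by nlinarith [Real.pi_pos])
  have hEuler := Real.tendsto_euler_sin_prod t
  have hP : Tendsto (fun n : ℕ => ∏ j ∈ Finset.range n, ((1:ℝ) - t^2/((j:ℝ)+1)^2))
      atTop (nhds (Real.sin (π*t) / (π*t))) := by
    have := hEuler.div_const (π*t)
    refine this.congr (fun n => ?_)
    rw [mul_comm (π*t), mul_div_assoc, div_self (ne_of_gt hπt), mul_one]
  have hlog : Tendsto (fun n : ℕ => Real.log (∏ j ∈ Finset.range n, ((1:ℝ) - t^2/((j:ℝ)+1)^2)))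
      atTop (nhds (Real.log (Real.sin (π*t) / (π*t)))) :=
    ((Real.continuousAt_log (by positivity)).tendsto.comp hP)
  have hlogprod : ∀ n : ℕ, Real.log (∏ j ∈ Finset.range n, ((1:ℝ) - t^2/((j:ℝ)+1)^2)) =
      ∑ j ∈ Finset.range n, Real.log ((1:ℝ) - t^2/((j:ℝ)+1)^2) := by
    intro n
    exact Real.log_prod (fun j _ => ne_of_gt (factor_pos hat j))
  rw [(summable_log_factor hat).hasSum_iff_tendsto_nat]
  exact hlog.congr (fun n => hlogprod n)

lemma hasSum_cot_aux {x : ℝ} (hx0 : 0 < x) (hx1 : x < 1) :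
    HasSum (fun n : ℕ => (-(2*x)/((n:ℝ)+1)^2) / (1 - x^2/((n:ℝ)+1)^2))
      (Real.cos (π*x) * π / Real.sin (π*x) - π / (π*x)) := by
  have hxb : x < (1+x)/2 := by linarith
  have hb1 : (1+x)/2 < 1 := by linarith
  have hb0 : (0:ℝ) < (1+x)/2 := by linarith
  have hb2 : (0:ℝ) < 1 - ((1+x)/2)^2 := by nlinarith
  have hn1 : ∀ n : ℕ, (1:ℝ) ≤ (n:ℝ) + 1 := by
    intro n
    have : (0:ℝ) ≤ n := Nat.cast_nonneg n
    linarith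
  have hfac : ∀ (n : ℕ) (y : ℝ), y ∈ Ioo (0:ℝ) ((1+x)/2) → 0 < 1 - y^2/((n:ℝ)+1)^2 := by
    intro n y hy
    apply factor_pos
    rw [abs_of_pos hy.1]
    exact hy.2.trans hb1
  have hu_sum : Summable (fun n : ℕ =>
      (2*((1+x)/2)/(1-((1+x)/2)^2)) * (1/((n:ℝ)+1)^2)) := by
    apply Summable.mul_left
    have := (summable_nat_add_iff 1).2 (Real.summable_one_div_nat_pow.2 one_lt_two)
    simpa using this
  have hderiv : ∀ (n : ℕ) (y : ℝ), y ∈ Ioo (0:ℝ) ((1+x)/2) →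
      HasDerivAt (fun y : ℝ => Real.log (1 - y^2/((n:ℝ)+1)^2))
        ((-(2*y)/((n:ℝ)+1)^2) / (1 - y^2/((n:ℝ)+1)^2)) y := by
    intro n y hy
    have hi : HasDerivAt (fun y : ℝ => 1 - y^2/((n:ℝ)+1)^2) (-(2*y)/((n:ℝ)+1)^2) y := by
      have h0 := ((hasDerivAt_pow 2 y).div_const (((n:ℝ)+1)^2)).const_sub 1
      refine h0.congr_deriv ?_
      norm_num
      ring
    exact hi.log (ne_of_gt (hfac n y hy))
  have hbound : ∀ (n : ℕ) (y : ℝ), y ∈ Ioo (0:ℝ) ((1+x)/2) →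
      ‖(-(2*y)/((n:ℝ)+1)^2) / (1 - y^2/((n:ℝ)+1)^2)‖ ≤
        (2*((1+x)/2)/(1-((1+x)/2)^2)) * (1/((n:ℝ)+1)^2) := by
    intro n y hy
    have h1 : (0:ℝ) < 1 - y^2/((n:ℝ)+1)^2 := hfac n y hy
    have hn2 : (1:ℝ) ≤ ((n:ℝ)+1)^2 := by nlinarith [hn1 n]
    have hyb2 : y^2 ≤ ((1+x)/2)^2 := by nlinarith [hy.1, hy.2]
    have hbn : y^2/((n:ℝ)+1)^2 ≤ ((1+x)/2)^2 := by
      calc y^2/((n:ℝ)+1)^2 ≤ y^2/1 := div_le_div_of_nonneg_left (sq_nonneg y) one_pos hn2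
        _ = y^2 := div_one _
        _ ≤ ((1+x)/2)^2 := hyb2
    have h2 : 1 - ((1+x)/2)^2 ≤ 1 - y^2/((n:ℝ)+1)^2 := by linarith
    rw [Real.norm_eq_abs, abs_div, abs_of_pos h1, abs_div, abs_neg,
      abs_of_nonneg (by linarith [hy.1] : (0:ℝ) ≤ 2*y),
      abs_of_pos (by positivity : (0:ℝ) < ((n:ℝ)+1)^2)]
    have hgoal : (2*((1+x)/2)/(1-((1+x)/2)^2)) * (1/((n:ℝ)+1)^2)
        = (2*((1+x)/2)/((n:ℝ)+1)^2) / (1-((1+x)/2)^2) := by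
      field_simp
    rw [hgoal]
    apply div_le_div₀ (by positivity) _ hb2 h2
    apply div_le_div_of_nonneg_right _ (by positivity)
    linarith [hy.1, hy.2]
  have hxmem : x ∈ Ioo (0:ℝ) ((1+x)/2) := ⟨hx0, hxb⟩
  have hsum0 : Summable fun n : ℕ => Real.log (1 - x^2/((n:ℝ)+1)^2) := by
    have : |x| < 1 := by rw [abs_of_pos hx0]; exact hx1
    exact summable_log_factor this
  have hA := hasDerivAt_tsum_of_isPreconnected hu_sum isOpen_Ioo isPreconnected_Ioo
    hderiv hbound hxmem hsum0 hxmem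
  have hEq : (fun z => Real.log (Real.sin (π*z)) - Real.log (π*z)) =ᶠ[nhds x]
      (fun z => ∑' n : ℕ, Real.log (1 - z^2/((n:ℝ)+1)^2)) := by
    filter_upwards [isOpen_Ioo.mem_nhds hxmem] with z hz
    have hz0 : 0 < z := hz.1
    have hz1 : z < 1 := hz.2.trans hb1
    rw [(hasSum_log_factor hz0 hz1).tsum_eq]
    have hπz : (0:ℝ) < π*z := by positivity
    have hsin : (0:ℝ) < Real.sin (π*z) :=
      Real.sin_pos_of_pos_of_lt_pi hπz (by nlinarith [Real.pi_pos])
    rw [Real.log_div (ne_of_gt hsin) (ne_of_gt hπz)]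
  have hB : HasDerivAt (fun z => Real.log (Real.sin (π*z)) - Real.log (π*z))
      (Real.cos (π*x) * π / Real.sin (π*x) - π / (π*x)) x := by
    have hπx : (0:ℝ) < π*x := by positivity
    have hsin : (0:ℝ) < Real.sin (π*x) :=
      Real.sin_pos_of_pos_of_lt_pi hπx (by nlinarith [Real.pi_pos])
    have hq : HasDerivAt (fun z : ℝ => π*z) π x := by
      simpa using (hasDerivAt_id x).const_mul π
    have h1 : HasDerivAt (fun z => Real.log (Real.sin (π*z)))
        (Real.cos (π*x) * π / Real.sin (π*x)) x := hq.sin.log (ne_of_gt hsin)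
    have h2 : HasDerivAt (fun z => Real.log (π*z)) (π / (π*x)) x := hq.log (ne_of_gt hπx)
    exact h1.sub h2
  have hB' : HasDerivAt (fun z => ∑' n : ℕ, Real.log (1 - z^2/((n:ℝ)+1)^2))
      (Real.cos (π*x) * π / Real.sin (π*x) - π / (π*x)) x :=
    hB.congr_of_eventuallyEq hEq.symm
  have huniq : (∑' n : ℕ, (-(2*x)/((n:ℝ)+1)^2) / (1 - x^2/((n:ℝ)+1)^2))
      = Real.cos (π*x) * π / Real.sin (π*x) - π / (π*x) := hA.unique hB'
  have hsum' : Summable fun n : ℕ => (-(2*x)/((n:ℝ)+1)^2) / (1 - x^2/((n:ℝ)+1)^2) :=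
    Summable.of_norm_bounded hu_sum (fun n => hbound n x hxmem)
  rw [← huniq]
  exact hsum'.hasSum

lemma hasSum_cot {x : ℝ} (hx0 : 0 < x) (hx1 : x < 1) :
    HasSum (fun n : ℕ => -2*x^2/(((n:ℝ)+1)^2 - x^2)) (π*x*Real.cot (π*x) - 1) := by
  have h := (hasSum_cot_aux hx0 hx1).mul_left x
  have hπx : (0:ℝ) < π*x := by positivity
  have hsin : (0:ℝ) < Real.sin (π*x) :=
    Real.sin_pos_of_pos_of_lt_pi hπx (by nlinarith [Real.pi_pos])
  have h1 : ∀ n : ℕ, x * ((-(2*x)/((n:ℝ)+1)^2) / (1 - x^2/((n:ℝ)+1)^2))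
      = -2*x^2/(((n:ℝ)+1)^2 - x^2) := by
    intro n
    have hn0 : (0:ℝ) < ((n:ℝ)+1)^2 := by positivity
    have hn1 : (1:ℝ) ≤ (n:ℝ) + 1 := by
      have : (0:ℝ) ≤ n := Nat.cast_nonneg n
      linarith
    have hd : (0:ℝ) < ((n:ℝ)+1)^2 - x^2 := by nlinarith
    field_simp
  have h2 : x * (Real.cos (π*x) * π / Real.sin (π*x) - π / (π*x))
      = π*x*Real.cot (π*x) - 1 := by
    rw [Real.cot_eq_cos_div_sin]
    field_simp
  have h3 : (fun n : ℕ => x * ((-(2*x)/((n:ℝ)+1)^2) / (1 - x^2/((n:ℝ)+1)^2)))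
      = fun n : ℕ => -2*x^2/(((n:ℝ)+1)^2 - x^2) := funext h1
  rw [← h2, ← h3]
  exact h


lemma integral_term {x : ℝ} (hx0 : 0 < x) (hx1 : x < 1) (n : ℕ) :
    ∫ t in (0:ℝ)..x, -2*t^2/(((n:ℝ)+1)^2 - t^2) =
      2*x + ((n:ℝ)+1)*(Real.log ((n:ℝ)+1-x) - Real.log ((n:ℝ)+1+x)) := by
  have hn1 : (1:ℝ) ≤ (n:ℝ) + 1 := by
    have : (0:ℝ) ≤ n := Nat.cast_nonneg n
    linarith
  have huIcc : Set.uIcc (0:ℝ) x = Set.Icc 0 x := Set.uIcc_of_le hx0.le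
  have hmem : ∀ t ∈ Set.uIcc (0:ℝ) x, 0 ≤ t ∧ t ≤ x := by
    intro t ht
    rw [huIcc] at ht
    exact ⟨ht.1, ht.2⟩
  have hderiv : ∀ t ∈ Set.uIcc (0:ℝ) x,
      HasDerivAt (fun t : ℝ => 2*t + ((n:ℝ)+1)*(Real.log ((n:ℝ)+1-t) - Real.log ((n:ℝ)+1+t)))
        (-2*t^2/(((n:ℝ)+1)^2 - t^2)) t := by
    intro t ht
    obtain ⟨ht0, htx⟩ := hmem t ht
    have hm : (0:ℝ) < (n:ℝ)+1-t := by linarith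
    have hp : (0:ℝ) < (n:ℝ)+1+t := by linarith
    have h1 : HasDerivAt (fun t : ℝ => (n:ℝ)+1-t) (-1) t := by
      simpa using (hasDerivAt_id t).const_sub ((n:ℝ)+1)
    have h2 : HasDerivAt (fun t : ℝ => (n:ℝ)+1+t) 1 t := by
      simpa using (hasDerivAt_id t).const_add ((n:ℝ)+1)
    have h3 : HasDerivAt (fun t : ℝ => Real.log ((n:ℝ)+1-t)) (-1/((n:ℝ)+1-t)) t :=
      h1.log (ne_of_gt hm)
    have h4 : HasDerivAt (fun t : ℝ => Real.log ((n:ℝ)+1+t)) (1/((n:ℝ)+1+t)) t :=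
      h2.log (ne_of_gt hp)
    have h5 : HasDerivAt (fun t : ℝ => 2*t) 2 t := by
      simpa using (hasDerivAt_id t).const_mul (2:ℝ)
    have h6 := h5.add (((h3.sub h4)).const_mul ((n:ℝ)+1))
    refine h6.congr_deriv ?_
    have hd : (0:ℝ) < ((n:ℝ)+1)^2 - t^2 := by nlinarith
    rw [eq_comm, div_eq_iff hd.ne', ← sub_eq_zero]
    field_simp
    ring
  have hcont : IntervalIntegrable (fun t : ℝ => -2*t^2/(((n:ℝ)+1)^2 - t^2)) volume 0 x := by
    apply ContinuousOn.intervalIntegrable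
    apply ContinuousOn.div
    · exact (continuous_const.mul (continuous_pow 2)).continuousOn
    · exact (continuous_const.sub (continuous_pow 2)).continuousOn
    · intro t ht
      obtain ⟨ht0, htx⟩ := hmem t ht
      have : (0:ℝ) < ((n:ℝ)+1)^2 - t^2 := by nlinarith
      exact ne_of_gt this
  have := intervalIntegral.integral_eq_sub_of_hasDerivAt hderiv hcont
  rw [this]
  simp

lemma norm_term_le {x : ℝ} (hx0 : 0 < x) (hx1 : x < 1) (n : ℕ) {t : ℝ}
    (ht0 : 0 < t) (htx : t ≤ x) :
    ‖-2*t^2/(((n:ℝ)+1)^2 - t^2)‖ ≤ 2*x^2/(((n:ℝ)+1)^2 - x^2) := by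
  have hn1 : (1:ℝ) ≤ (n:ℝ) + 1 := by
    have : (0:ℝ) ≤ n := Nat.cast_nonneg n
    linarith
  have hdx : (0:ℝ) < ((n:ℝ)+1)^2 - x^2 := by nlinarith
  have hdt : (0:ℝ) < ((n:ℝ)+1)^2 - t^2 := by nlinarith
  rw [Real.norm_eq_abs, abs_div, abs_of_pos hdt]
  have habs : |(-2)*t^2| = 2*t^2 := by
    rw [abs_mul]
    simp [abs_of_nonneg (sq_nonneg t)]
  rw [habs]
  apply div_le_div₀ (by positivity) (by nlinarith) hdx (by nlinarith)

lemma summable_bound {x : ℝ} (hx0 : 0 < x) (hx1 : x < 1) :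
    Summable (fun n : ℕ => 2*x^2/(((n:ℝ)+1)^2 - x^2)) := by
  have hx2 : x^2 < 1 := by nlinarith
  have hb : ∀ n : ℕ, ‖2*x^2/(((n:ℝ)+1)^2 - x^2)‖ ≤ (2*x^2/(1-x^2)) * (1/((n:ℝ)+1)^2) := by
    intro n
    have hn1 : (1:ℝ) ≤ (n:ℝ) + 1 := by
      have : (0:ℝ) ≤ n := Nat.cast_nonneg n
      linarith
    have hn2 : (1:ℝ) ≤ ((n:ℝ)+1)^2 := by nlinarith
    have hdx : (0:ℝ) < ((n:ℝ)+1)^2 - x^2 := by nlinarith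
    rw [Real.norm_eq_abs, abs_of_nonneg (le_of_lt (div_pos (by positivity) hdx))]
    have key : ((n:ℝ)+1)^2 * (1 - x^2) ≤ ((n:ℝ)+1)^2 - x^2 := by nlinarith
    calc 2*x^2/(((n:ℝ)+1)^2 - x^2) ≤ 2*x^2/(((n:ℝ)+1)^2 * (1 - x^2)) :=
          div_le_div_of_nonneg_left (by positivity) (mul_pos (by positivity) (by nlinarith)) key
      _ = (2*x^2/(1-x^2)) * (1/((n:ℝ)+1)^2) := by
          field_simp
  apply Summable.of_norm_bounded _ hb
  apply Summable.mul_left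
  have := (summable_nat_add_iff 1).2 (Real.summable_one_div_nat_pow.2 one_lt_two)
  simpa using this

lemma integral_eq {x : ℝ} (hx0 : 0 < x) (hx1 : x < 1) :
    ∫ t in (0:ℝ)..x, π * t * Real.cot (π * t) =
      x + ∑' n : ℕ, (2*x + ((n:ℝ)+1)*(Real.log ((n:ℝ)+1-x) - Real.log ((n:ℝ)+1+x))) := by
  have hC : Summable (fun n : ℕ => 2*x^2/(((n:ℝ)+1)^2 - x^2)) := summable_bound hx0 hx1
  have hmeasF : ∀ n : ℕ, AEStronglyMeasurable (fun t : ℝ => -2*t^2/(((n:ℝ)+1)^2 - t^2))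
      (volume.restrict (Ioc 0 x)) := by
    intro n
    apply Measurable.aestronglyMeasurable
    exact (measurable_const.mul (measurable_id.pow_const 2)).div
      (measurable_const.sub (measurable_id.pow_const 2))
  have h_bound : ∀ n : ℕ, ∀ᵐ t ∂(volume.restrict (Ioc (0:ℝ) x)),
      ‖-2*t^2/(((n:ℝ)+1)^2 - t^2)‖ ≤ 2*x^2/(((n:ℝ)+1)^2 - x^2) := by
    intro n
    rw [ae_restrict_iff' measurableSet_Ioc]
    exact ae_of_all _ (fun t ht => norm_term_le hx0 hx1 n ht.1 ht.2)
  have h_lim : ∀ᵐ t ∂(volume.restrict (Ioc (0:ℝ) x)),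
      HasSum (fun n : ℕ => -2*t^2/(((n:ℝ)+1)^2 - t^2)) (π*t*Real.cot (π*t) - 1) := by
    rw [ae_restrict_iff' measurableSet_Ioc]
    exact ae_of_all _ (fun t ht => hasSum_cot ht.1 (lt_of_le_of_lt ht.2 hx1))
  have hCint : Integrable (fun _ : ℝ => ∑' n : ℕ, 2*x^2/(((n:ℝ)+1)^2 - x^2))
      (volume.restrict (Ioc (0:ℝ) x)) := by
    exact integrableOn_const measure_Ioc_lt_top.ne
  have hkey := hasSum_integral_of_dominated_convergence
      (μ := volume.restrict (Ioc (0:ℝ) x))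
      (F := fun (n : ℕ) (t : ℝ) => -2*t^2/(((n:ℝ)+1)^2 - t^2))
      (f := fun t => π*t*Real.cot (π*t) - 1)
      (fun n _ => 2*x^2/(((n:ℝ)+1)^2 - x^2))
      hmeasF h_bound (ae_of_all _ (fun _ => hC)) hCint h_lim
  have hcot_meas : Measurable Real.cot := by
    have : Real.cot = fun y => Real.cos y / Real.sin y := funext Real.cot_eq_cos_div_sin
    rw [this]
    exact Real.measurable_cos.div Real.measurable_sin
  have hf_meas : AEStronglyMeasurable (fun t : ℝ => π*t*Real.cot (π*t) - 1)
      (volume.restrict (Ioc (0:ℝ) x)) := by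
    apply Measurable.aestronglyMeasurable
    exact ((measurable_const.mul measurable_id).mul
      (hcot_meas.comp (measurable_const.mul measurable_id))).sub measurable_const
  have hf_bound : ∀ᵐ t ∂(volume.restrict (Ioc (0:ℝ) x)),
      ‖π*t*Real.cot (π*t) - 1‖ ≤ ∑' n : ℕ, 2*x^2/(((n:ℝ)+1)^2 - x^2) := by
    rw [ae_restrict_iff' measurableSet_Ioc]
    refine ae_of_all _ (fun t ht => ?_)
    have hs := hasSum_cot ht.1 (lt_of_le_of_lt ht.2 hx1)
    rw [← hs.tsum_eq]
    have hnorms : Summable (fun n : ℕ => ‖-2*t^2/(((n:ℝ)+1)^2 - t^2)‖) :=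
      Summable.of_nonneg_of_le (fun n => norm_nonneg _)
        (fun n => norm_term_le hx0 hx1 n ht.1 ht.2) hC
    calc ‖∑' n : ℕ, -2*t^2/(((n:ℝ)+1)^2 - t^2)‖
        ≤ ∑' n : ℕ, ‖-2*t^2/(((n:ℝ)+1)^2 - t^2)‖ := norm_tsum_le_tsum_norm hnorms
      _ ≤ ∑' n : ℕ, 2*x^2/(((n:ℝ)+1)^2 - x^2) :=
          Summable.tsum_le_tsum (fun n => norm_term_le hx0 hx1 n ht.1 ht.2) hnorms hC
  have hf_int : Integrable (fun t : ℝ => π*t*Real.cot (π*t) - 1)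
      (volume.restrict (Ioc (0:ℝ) x)) := hCint.mono' hf_meas hf_bound
  rw [intervalIntegral.integral_of_le hx0.le]
  have hsplit : (∫ t in Ioc (0:ℝ) x, π*t*Real.cot (π*t)) =
      (∫ t in Ioc (0:ℝ) x, ((π*t*Real.cot (π*t) - 1) + 1)) := by
    congr 1
    funext t
    ring
  rw [hsplit, integral_add hf_int (integrableOn_const measure_Ioc_lt_top.ne)]
  have h1 : (∫ _ in Ioc (0:ℝ) x, (1:ℝ)) = x := by
    rw [setIntegral_const, Real.volume_real_Ioc_of_le hx0.le, smul_eq_mul, mul_one, sub_zero]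
  have h2 : (∫ t in Ioc (0:ℝ) x, (π*t*Real.cot (π*t) - 1)) =
      ∑' n : ℕ, (2*x + ((n:ℝ)+1)*(Real.log ((n:ℝ)+1-x) - Real.log ((n:ℝ)+1+x))) := by
    rw [← hkey.tsum_eq]
    apply tsum_congr
    intro n
    rw [← intervalIntegral.integral_of_le hx0.le]
    exact integral_term hx0 hx1 n
  rw [h1, h2]
  ring

end DG

theorem integral_cot_eq (x : ℝ) (hx0 : 0 < x) (hx1 : x < 1) :
    ∫ t in (0 : ℝ)..x, π * t * Real.cot (π * t) =
      x * Real.log (2 * π) +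
        Real.log (doubleGamma (1 - x) / doubleGamma (1 + x)) := by
  rw [DG.rhs_eq hx0 hx1]
  exact DG.integral_eq hx0 hx1
end

section
/- The logarithmic derivative of the double gamma function: for every real x > 0, the function x ↦ ln G(x) is differentiable at x and its derivative φ(x) satisfies φ(x) = (x−1)·(ψ(x) − 1) + (ln(2π) − 1)/2, where ψ = Γ'/Γ is the digamma function. In particular φ(1) = (ln(2π) − 1)/2. -/
set_option maxHeartbeats 1600000

open Real

/-- The digamma function `ψ = Γ'/Γ`. -/
noncomputable def digamma (x : ℝ) : ℝ := deriv Real.Gamma x / Real.Gamma x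

section AuxDoubleGamma

open Filter Topology Finset Set

local notation "γ" => Real.eulerMascheroniConstant

private lemma sq_summable : Summable (fun n : ℕ => 1 / ((n : ℝ) + 1) ^ 2) := by
  have h : Summable (fun n : ℕ => 1 / ((n : ℝ)) ^ 2) := summable_one_div_nat_pow.mpr one_lt_two
  have := (summable_nat_add_iff (f := fun n : ℕ => 1 / ((n : ℝ)) ^ 2) 1).mpr h
  refine this.congr fun n => by push_cast; ring

private lemma term_eq (x : ℝ) (hx : 0 < x) (n : ℕ) :
    1 / ((n : ℝ) + 1) - 1 / ((n : ℝ) + x) = (x - 1) / (((n : ℝ) + 1) * ((n : ℝ) + x)) := by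
  have h1 : ((n : ℝ) + 1) ≠ 0 := by positivity
  have h2 : ((n : ℝ) + x) ≠ 0 := by positivity
  field_simp
  ring

private lemma summable_T {x : ℝ} (hx : 0 < x) :
    Summable (fun n : ℕ => 1 / ((n : ℝ) + 1) - 1 / ((n : ℝ) + x)) := by
  refine Summable.of_norm_bounded (g := fun n => (|x - 1| / min x 1) * (1 / ((n:ℝ)+1)^2))
    (sq_summable.mul_left _) (fun n => ?_)
  have h1 : (0:ℝ) < (n : ℝ) + 1 := by positivity
  have h2 : (0:ℝ) < (n : ℝ) + x := by positivity
  have hc : (0:ℝ) < min x 1 := lt_min hx one_pos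
  rw [term_eq x hx n, Real.norm_eq_abs, abs_div,
    abs_of_pos (show (0:ℝ) < ((n:ℝ)+1)*((n:ℝ)+x) by positivity),
    div_mul_div_comm, mul_one]
  refine div_le_div_of_nonneg_left (abs_nonneg _) (by positivity) ?_
  have h3 : min x 1 ≤ x := min_le_left _ _
  have h4 : min x 1 ≤ 1 := min_le_right _ _
  have h5 : (0:ℝ) ≤ n := n.cast_nonneg
  calc min x 1 * ((n:ℝ)+1)^2 = (min x 1 * ((n:ℝ)+1)) * ((n:ℝ)+1) := by ring
    _ ≤ ((n:ℝ)+x) * ((n:ℝ)+1) := by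
        refine mul_le_mul_of_nonneg_right ?_ h1.le
        nlinarith [mul_le_mul_of_nonneg_right h4 h5]
    _ = ((n:ℝ)+1) * ((n:ℝ)+x) := by ring

/-- The auxiliary series `∑ (1/(n+1) - 1/(n+x))`, equal to `ψ(x) + γ`. -/
noncomputable def TAux (x : ℝ) : ℝ := ∑' n : ℕ, (1 / ((n : ℝ) + 1) - 1 / ((n : ℝ) + x))

private lemma hasSum_telescope {x : ℝ} (hx : 0 < x) :
    HasSum (fun n : ℕ => 1 / ((n : ℝ) + x) - 1 / ((n : ℝ) + 1 + x)) (1 / x) := by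
  have hnn : ∀ n : ℕ, 0 ≤ 1 / ((n : ℝ) + x) - 1 / ((n : ℝ) + 1 + x) := by
    intro n
    have h1 : (0:ℝ) < (n : ℝ) + x := by positivity
    have : 1 / ((n : ℝ) + 1 + x) ≤ 1 / ((n : ℝ) + x) :=
      one_div_le_one_div_of_le h1 (by linarith)
    linarith
  rw [hasSum_iff_tendsto_nat_of_nonneg hnn]
  have key : ∀ N : ℕ, ∑ i ∈ Finset.range N, (1 / ((i : ℝ) + x) - 1 / ((i : ℝ) + 1 + x))
      = 1 / x - 1 / ((N : ℝ) + x) := by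
    intro N
    have := Finset.sum_range_sub' (fun i : ℕ => 1 / ((i : ℝ) + x)) N
    simp only [Nat.cast_add, Nat.cast_one, Nat.cast_zero, zero_add] at this
    exact this
  simp only [key]
  have h0 : Tendsto (fun N : ℕ => 1 / ((N : ℝ) + x)) atTop (𝓝 0) := by
    simp only [one_div]
    exact (tendsto_atTop_add_const_right atTop x tendsto_natCast_atTop_atTop).inv_tendsto_atTop
  simpa using tendsto_const_nhds.sub h0

private lemma TAux_rec {x : ℝ} (hx : 0 < x) : TAux (x + 1) = TAux x + 1 / x := by
  have h1 := summable_T hx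
  have h2 := (hasSum_telescope hx).summable
  have : TAux (x + 1) = ∑' n : ℕ, ((1 / ((n : ℝ) + 1) - 1 / ((n : ℝ) + x))
      + (1 / ((n : ℝ) + x) - 1 / ((n : ℝ) + 1 + x))) := by
    rw [TAux]
    congr 1
    ext n
    ring_nf
  rw [this, Summable.tsum_add h1 h2, (hasSum_telescope hx).tsum_eq, TAux]

private lemma TAux_one : TAux 1 = 0 := by simp [TAux]

private lemma TAux_nat (m : ℕ) :
    TAux ((m : ℝ) + 1) = ∑ i ∈ Finset.range m, 1 / ((i : ℝ) + 1) := by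
  induction m with
  | zero => simpa using TAux_one
  | succ m ih =>
    have : ((m + 1 : ℕ) : ℝ) + 1 = ((m : ℝ) + 1) + 1 := by push_cast; ring
    rw [this, TAux_rec (by positivity), ih, Finset.sum_range_succ]

private lemma TAux_mono {x y : ℝ} (hx : 0 < x) (hxy : x ≤ y) : TAux x ≤ TAux y := by
  refine Summable.tsum_le_tsum (fun n => ?_) (summable_T hx) (summable_T (lt_of_lt_of_le hx hxy))
  have h1 : (0:ℝ) < (n : ℝ) + x := by positivity
  have : 1 / ((n : ℝ) + y) ≤ 1 / ((n : ℝ) + x) :=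
    one_div_le_one_div_of_le h1 (by linarith)
  linarith

private lemma diffGamma {x : ℝ} (hx : 0 < x) : DifferentiableAt ℝ Real.Gamma x :=
  Real.differentiableAt_Gamma fun m => ((neg_nonpos.mpr m.cast_nonneg).trans_lt hx).ne'

private lemma diffLogGamma {x : ℝ} (hx : 0 < x) :
    DifferentiableAt ℝ (Real.log ∘ Real.Gamma) x :=
  (diffGamma hx).log (Real.Gamma_pos_of_pos hx).ne'

private lemma deriv_logGamma {x : ℝ} (hx : 0 < x) :
    deriv (Real.log ∘ Real.Gamma) x = deriv Real.Gamma x / Real.Gamma x := by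
  rw [Function.comp_def, deriv.log (diffGamma hx) (Real.Gamma_pos_of_pos hx).ne']

private lemma D_rec {z : ℝ} (hz : 0 < z) :
    deriv (Real.log ∘ Real.Gamma) (z + 1) = deriv (Real.log ∘ Real.Gamma) z + 1 / z := by
  rw [← deriv_comp_add_const, one_div, ← Real.deriv_log,
    ← deriv_add (diffLogGamma hz) (Real.differentiableAt_log hz.ne')]
  apply Filter.EventuallyEq.deriv_eq
  filter_upwards [eventually_gt_nhds hz] with t ht
  simp only [Function.comp_apply, Pi.add_apply, Real.Gamma_add_one ht.ne',
    Real.log_mul ht.ne' (Real.Gamma_pos_of_pos ht).ne', add_comm]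

private lemma harmonic_cast (n : ℕ) :
    ((harmonic n : ℚ) : ℝ) = ∑ i ∈ Finset.range n, 1 / ((i : ℝ) + 1) := by
  rw [harmonic]
  push_cast
  simp [one_div]

private lemma D_nat (n : ℕ) : deriv (Real.log ∘ Real.Gamma) ((n : ℝ) + 1)
    = -γ + ∑ i ∈ Finset.range n, 1 / ((i : ℝ) + 1) := by
  have h0 : (0:ℝ) < (n : ℝ) + 1 := by positivity
  have hfac : ((n.factorial : ℕ) : ℝ) ≠ 0 := by positivity
  rw [deriv_logGamma h0, Real.deriv_Gamma_nat, Real.Gamma_nat_eq_factorial,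
    mul_div_cancel_left₀ _ hfac, harmonic_cast]

private lemma D_mono : MonotoneOn (deriv (Real.log ∘ Real.Gamma)) (Set.Ioi 0) :=
  Real.convexOn_log_Gamma.monotoneOn_deriv fun _ hx => diffLogGamma hx

private lemma squeeze (m : ℕ) {z : ℝ} (hz1 : (m : ℝ) + 1 ≤ z) (hz2 : z ≤ (m : ℝ) + 2) :
    |deriv (Real.log ∘ Real.Gamma) z - (-γ + TAux z)| ≤ 1 / ((m : ℝ) + 1) := by
  have hm0 : (0:ℝ) ≤ m := m.cast_nonneg
  have hzpos : (0:ℝ) < z := by linarith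
  have hA : deriv (Real.log ∘ Real.Gamma) ((m : ℝ) + 1)
      = -γ + ∑ i ∈ Finset.range m, 1 / ((i : ℝ) + 1) := D_nat m
  have hB : deriv (Real.log ∘ Real.Gamma) ((m : ℝ) + 2)
      = -γ + (∑ i ∈ Finset.range m, 1 / ((i : ℝ) + 1) + 1 / ((m : ℝ) + 1)) := by
    have := D_nat (m + 1)
    push_cast at this
    rw [Finset.sum_range_succ] at this
    convert this using 2 <;> ring
  have hTA : TAux ((m : ℝ) + 1) = ∑ i ∈ Finset.range m, 1 / ((i : ℝ) + 1) := TAux_nat m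
  have hTB : TAux ((m : ℝ) + 2)
      = ∑ i ∈ Finset.range m, 1 / ((i : ℝ) + 1) + 1 / ((m : ℝ) + 1) := by
    have := TAux_nat (m + 1)
    push_cast at this
    rw [Finset.sum_range_succ] at this
    convert this using 2 <;> ring
  have d1 := D_mono (Set.mem_Ioi.mpr (by positivity : (0:ℝ) < (m : ℝ) + 1))
    (Set.mem_Ioi.mpr hzpos) hz1
  have d2 := D_mono (Set.mem_Ioi.mpr hzpos)
    (Set.mem_Ioi.mpr (by positivity : (0:ℝ) < (m : ℝ) + 2)) hz2
  have t1 := TAux_mono (by positivity : (0:ℝ) < (m : ℝ) + 1) hz1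
  have t2 := TAux_mono hzpos hz2
  rw [hA] at d1; rw [hB] at d2; rw [hTA] at t1; rw [hTB] at t2
  rw [abs_le]
  constructor <;> linarith

/-- auxiliary difference function -/
noncomputable def dAux (z : ℝ) : ℝ := deriv (Real.log ∘ Real.Gamma) z - (-γ + TAux z)

private lemma psi_eq {x : ℝ} (hx : 0 < x) :
    deriv (Real.log ∘ Real.Gamma) x = -γ + TAux x := by
  set d := dAux with hd
  have hper : ∀ z : ℝ, 0 < z → d (z + 1) = d z := by
    intro z hz
    simp only [hd, dAux]
    rw [D_rec hz, TAux_rec hz]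
    ring
  have hshift : ∀ n : ℕ, d (x + n) = d x := by
    intro n
    induction n with
    | zero => simp
    | succ n ih =>
      have : x + ((n + 1 : ℕ) : ℝ) = (x + n) + 1 := by push_cast; ring
      rw [this, hper _ (by positivity), ih]
  have hbound : ∀ n : ℕ, |d x| ≤ 1 / ((n : ℝ) + ((⌊x⌋₊ : ℝ) + 1)) := by
    intro n
    have h1 : (⌊x⌋₊ : ℝ) ≤ x := Nat.floor_le hx.le
    have h2 : x ≤ (⌊x⌋₊ : ℝ) + 1 := (Nat.lt_floor_add_one x).le
    have hsq := squeeze (⌊x⌋₊ + n) (z := x + ((n + 1 : ℕ) : ℝ))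
      (by push_cast; linarith) (by push_cast; linarith)
    have hsq' : |d (x + ((n + 1 : ℕ) : ℝ))| ≤ 1 / (((⌊x⌋₊ + n : ℕ) : ℝ) + 1) := hsq
    rw [hshift (n + 1)] at hsq'
    calc |d x| ≤ 1 / (((⌊x⌋₊ + n : ℕ) : ℝ) + 1) := hsq'
      _ = 1 / ((n : ℝ) + ((⌊x⌋₊ : ℝ) + 1)) := by push_cast; ring_nf
  have hlim : Tendsto (fun n : ℕ => 1 / ((n : ℝ) + ((⌊x⌋₊ : ℝ) + 1))) atTop (𝓝 0) := by
    simp only [one_div]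
    exact (tendsto_atTop_add_const_right atTop _ tendsto_natCast_atTop_atTop).inv_tendsto_atTop
  have h0 : |d x| ≤ 0 := ge_of_tendsto' hlim hbound
  have hz : d x = 0 := abs_nonpos_iff.mp h0
  simp only [hd, dAux] at hz
  linarith

private lemma digamma_series {x : ℝ} (hx : 0 < x) :
    deriv Real.Gamma x / Real.Gamma x = -γ + TAux x := by
  rw [← deriv_logGamma hx, psi_eq hx]

/-- the log of the `n`-th Weierstrass factor -/
noncomputable def fW (n : ℕ) (y : ℝ) : ℝ :=
  ((n : ℝ) + 1) * Real.log (1 + (y - 1) / ((n : ℝ) + 1)) +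
    (-(y - 1) + (y - 1) ^ 2 / (2 * ((n : ℝ) + 1)))

/-- the derivative of `fW n` -/
noncomputable def fW' (n : ℕ) (y : ℝ) : ℝ := (y - 1) * (1 / ((n : ℝ) + 1) - 1 / ((n : ℝ) + y))

private lemma base_eq (n : ℕ) (y : ℝ) :
    1 + (y - 1) / ((n : ℝ) + 1) = ((n : ℝ) + y) / ((n : ℝ) + 1) := by
  have h1 : ((n : ℝ) + 1) ≠ 0 := by positivity
  field_simp
  ring

private lemma base_pos {y : ℝ} (hy : 0 < y) (n : ℕ) : 0 < 1 + (y - 1) / ((n : ℝ) + 1) := by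
  rw [base_eq]; positivity

private lemma log_est {u : ℝ} (hu : |u| ≤ 1/2) :
    |Real.log (1 + u) - u + u ^ 2 / 2| ≤ 2 * |u| ^ 3 := by
  have h1 : |(-u)| < 1 := by rw [abs_neg]; linarith [abs_nonneg u]
  have h := Real.abs_log_sub_add_sum_range_le h1 2
  have hs : ∑ i ∈ Finset.range 2, (-u) ^ (i + 1) / (i + 1) = -u + u ^ 2 / 2 := by
    simp [Finset.sum_range_succ]
    ring
  rw [hs, abs_neg] at h
  have h3 : |(-u + u ^ 2 / 2) + Real.log (1 + u)| ≤ |u| ^ 3 / (1 - |u|) := by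
    rw [sub_neg_eq_add] at h
    norm_num at h
    convert h using 2
  have h4 : |u| ^ 3 / (1 - |u|) ≤ 2 * |u| ^ 3 := by
    rw [div_le_iff₀ (by linarith [abs_nonneg u] : (0:ℝ) < 1 - |u|)]
    nlinarith [abs_nonneg u, pow_nonneg (abs_nonneg u) 3]
  calc |Real.log (1 + u) - u + u ^ 2 / 2| = |(-u + u ^ 2 / 2) + Real.log (1 + u)| := by
        congr 1; ring
    _ ≤ |u| ^ 3 / (1 - |u|) := h3
    _ ≤ 2 * |u| ^ 3 := h4

private lemma fW_as (n : ℕ) (y : ℝ) :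
    fW n y = ((n : ℝ) + 1) * (Real.log (1 + (y - 1) / ((n : ℝ) + 1))
      - (y - 1) / ((n : ℝ) + 1) + ((y - 1) / ((n : ℝ) + 1)) ^ 2 / 2) := by
  have h1 : ((n : ℝ) + 1) ≠ 0 := by positivity
  rw [fW]
  field_simp
  ring

private lemma summable_fW {y : ℝ} (hy : 0 < y) : Summable (fun n => fW n y) := by
  refine Summable.of_norm_bounded_eventually_nat
    (g := fun n => (2 * |y - 1| ^ 3) * (1 / ((n : ℝ) + 1) ^ 2)) (sq_summable.mul_left _) ?_
  have hev : ∀ᶠ n : ℕ in atTop, 2 * |y - 1| ≤ (n : ℝ) + 1 :=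
    (tendsto_atTop_add_const_right atTop (1:ℝ)
      tendsto_natCast_atTop_atTop).eventually_ge_atTop _
  filter_upwards [hev] with n hn
  have h1 : (0:ℝ) < (n : ℝ) + 1 := by positivity
  set u := (y - 1) / ((n : ℝ) + 1) with hu
  have hu2 : |u| ≤ 1 / 2 := by
    rw [hu, abs_div, abs_of_pos h1, div_le_iff₀ h1]
    linarith [abs_nonneg (y-1)]
  have key := log_est hu2
  rw [Real.norm_eq_abs, fW_as, abs_mul, abs_of_pos h1]
  calc ((n:ℝ)+1) * |Real.log (1 + u) - u + u ^ 2 / 2| ≤ ((n:ℝ)+1) * (2 * |u| ^ 3) :=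
        mul_le_mul_of_nonneg_left key h1.le
    _ = 2 * |y-1|^3 * (1 / ((n:ℝ)+1)^2) := by
        rw [hu, abs_div, abs_of_pos h1, div_pow]
        field_simp

end AuxDoubleGamma

section MainDoubleGamma

open Filter Topology Finset Set

local notation "γ" => Real.eulerMascheroniConstant

private lemma factor_eq {y : ℝ} (hy : 0 < y) (n : ℕ) :
    (1 + (y - 1) / ((n : ℝ) + 1)) ^ (n + 1) *
      Real.exp (-(y - 1) + (y - 1) ^ 2 / (2 * ((n : ℝ) + 1))) = Real.exp (fW n y) := by
  have hb := base_pos hy n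
  have h2 : Real.exp (((n : ℝ) + 1) * Real.log (1 + (y - 1) / ((n : ℝ) + 1)))
      = (1 + (y - 1) / ((n : ℝ) + 1)) ^ (n + 1) := by
    have h := Real.exp_log (pow_pos hb (n + 1))
    rw [Real.log_pow, Nat.cast_add, Nat.cast_one] at h
    exact h
  rw [fW]
  conv_rhs => rw [Real.exp_add]
  rw [h2]

private lemma tprod_fW {y : ℝ} (hy : 0 < y) :
    (∏' n : ℕ, ((1 + (y - 1) / ((n : ℝ) + 1)) ^ (n + 1) *
      Real.exp (-(y - 1) + (y - 1) ^ 2 / (2 * ((n : ℝ) + 1)))))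
      = Real.exp (∑' n, fW n y) := by
  have h := ((summable_fW hy).hasSum.rexp).tprod_eq
  rw [← h]
  exact tprod_congr fun n => factor_eq hy n

private lemma log_doubleGamma_eq {y : ℝ} (hy : 0 < y) :
    Real.log (doubleGamma y) = (y - 1) / 2 * Real.log (2 * π)
      + (-(y - 1) * y / 2 - γ * (y - 1) ^ 2 / 2) + ∑' n, fW n y := by
  have h2π : (0 : ℝ) < 2 * π := by positivity
  rw [doubleGamma, tprod_fW hy,
    Real.log_mul (by positivity) (Real.exp_pos _).ne',
    Real.log_mul (Real.rpow_pos_of_pos h2π _).ne' (Real.exp_pos _).ne',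
    Real.log_rpow h2π, Real.log_exp, Real.log_exp]

private lemma hasDerivAt_fW (n : ℕ) {y : ℝ} (hy : 0 < y) :
    HasDerivAt (fun z => fW n z) (fW' n y) y := by
  have h1 : (0 : ℝ) < (n : ℝ) + 1 := by positivity
  have hb := base_pos hy n
  have hinner : HasDerivAt (fun z : ℝ => 1 + (z - 1) / ((n : ℝ) + 1)) (1 / ((n : ℝ) + 1)) y := by
    simpa using (((hasDerivAt_id y).sub_const 1).div_const ((n : ℝ) + 1)).const_add 1
  have hlog := (hinner.log hb.ne').const_mul ((n : ℝ) + 1)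
  have ha : HasDerivAt (fun z : ℝ => z - 1) 1 y := (hasDerivAt_id y).sub_const 1
  have hq := (ha.neg).add ((ha.pow 2).div_const (2 * ((n : ℝ) + 1)))
  have htot := hlog.add hq
  have heq : HasDerivAt (fun z => fW n z)
      (((n : ℝ) + 1) * (1 / ((n : ℝ) + 1) / (1 + (y - 1) / ((n : ℝ) + 1)))
        + (-1 + (2 : ℕ) * (y - 1) ^ (2 - 1) * 1 / (2 * ((n : ℝ) + 1)))) y := by
    simp only [fW]
    exact htot
  convert heq using 1
  have h2 : ((n : ℝ) + y) ≠ 0 := by positivity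
  have h3 : (1 + (y - 1) / ((n : ℝ) + 1)) ≠ 0 := hb.ne'
  rw [fW', base_eq]
  field_simp
  ring

private lemma hasDerivAt_SW {x : ℝ} (hx : 0 < x) :
    HasDerivAt (fun y => ∑' n, fW n y) ((x - 1) * TAux x) x := by
  have hc : (0 : ℝ) < min (x / 2) 1 := lt_min (by linarith) one_pos
  have key : HasDerivAt (fun y => ∑' n, fW n y) (∑' n, fW' n x) x := by
    refine hasDerivAt_tsum_of_isPreconnected
      (u := fun n : ℕ => ((x + 1) ^ 2 / min (x / 2) 1) * (1 / ((n : ℝ) + 1) ^ 2))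
      (t := Set.Ioo (x / 2) (x + 1)) (y₀ := x) (y := x) (g := fun n y => fW n y) (g' := fW')
      (sq_summable.mul_left _) isOpen_Ioo (convex_Ioo (x / 2) (x + 1)).isPreconnected
      (fun n y hy => hasDerivAt_fW n (by have h := hy.1; linarith [h]))
      (fun n y hy => ?_) (Set.mem_Ioo.mpr ⟨by linarith, by linarith⟩) (summable_fW hx)
      (Set.mem_Ioo.mpr ⟨by linarith, by linarith⟩)
    obtain ⟨hy1, hy2⟩ := hy
    have hy0 : (0 : ℝ) < y := by linarith
    have h1 : (0 : ℝ) < (n : ℝ) + 1 := by positivity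
    have h2 : (0 : ℝ) < (n : ℝ) + y := by positivity
    have hden : min (x / 2) 1 * ((n : ℝ) + 1) ^ 2 ≤ ((n : ℝ) + 1) * ((n : ℝ) + y) := by
      have k1 : min (x / 2) 1 ≤ x / 2 := min_le_left _ _
      have k2 : min (x / 2) 1 ≤ 1 := min_le_right _ _
      have k3 : (0 : ℝ) ≤ (n : ℝ) := n.cast_nonneg
      have k4 : min (x / 2) 1 * ((n : ℝ) + 1) ≤ (n : ℝ) + y := by
        nlinarith [mul_le_mul_of_nonneg_right k2 k3]
      calc min (x / 2) 1 * ((n : ℝ) + 1) ^ 2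
          = (min (x / 2) 1 * ((n : ℝ) + 1)) * ((n : ℝ) + 1) := by ring
        _ ≤ ((n : ℝ) + y) * ((n : ℝ) + 1) := mul_le_mul_of_nonneg_right k4 h1.le
        _ = ((n : ℝ) + 1) * ((n : ℝ) + y) := by ring
    rw [fW', Real.norm_eq_abs, term_eq y hy0 n, abs_mul, abs_div,
      abs_of_pos (mul_pos h1 h2)]
    calc |y - 1| * (|y - 1| / (((n : ℝ) + 1) * ((n : ℝ) + y)))
        = (|y - 1| * |y - 1|) / (((n : ℝ) + 1) * ((n : ℝ) + y)) := by ring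
      _ ≤ (x + 1) ^ 2 / (min (x / 2) 1 * ((n : ℝ) + 1) ^ 2) := by
          refine div_le_div₀ (by positivity) ?_ (by positivity) hden
          have hy1' : |y - 1| ≤ x + 1 := by
            rw [abs_le]; constructor <;> nlinarith
          nlinarith [abs_nonneg (y - 1)]
      _ = (x + 1) ^ 2 / min (x / 2) 1 * (1 / ((n : ℝ) + 1) ^ 2) := by
          rw [div_mul_div_comm, mul_one]
  convert key using 1
  rw [TAux, ← tsum_mul_left]
  simp only [fW']

private lemma main_hasDerivAt {x : ℝ} (hx : 0 < x) :
    HasDerivAt (fun y => Real.log (doubleGamma y))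
      ((x - 1) * (digamma x - 1) + (Real.log (2 * π) - 1) / 2) x := by
  have h1 : HasDerivAt (fun y : ℝ => (y - 1) / 2 * Real.log (2 * π))
      (1 / 2 * Real.log (2 * π)) x := by
    simpa using (((hasDerivAt_id x).sub_const 1).div_const 2).mul_const (Real.log (2 * π))
  have ha : HasDerivAt (fun z : ℝ => z - 1) 1 x := (hasDerivAt_id x).sub_const 1
  have h2 : HasDerivAt (fun y : ℝ => -(y - 1) * y / 2 - γ * (y - 1) ^ 2 / 2)
      ((-(1 * x + (x - 1) * 1)) / 2 - γ * ((2 : ℕ) * (x - 1) ^ (2 - 1) * 1) / 2) x := by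
    have hstep : HasDerivAt (fun y : ℝ => -((y - 1) * y) / 2 - γ * (y - 1) ^ 2 / 2)
        ((-(1 * x + (x - 1) * 1)) / 2 - γ * ((2 : ℕ) * (x - 1) ^ (2 - 1) * 1) / 2) x :=
      ((ha.mul (hasDerivAt_id x)).neg.div_const 2).sub (((ha.pow 2).const_mul γ).div_const 2)
    refine hstep.congr_of_eventuallyEq (Filter.Eventually.of_forall fun y => by ring)
  have htot := (h1.add h2).add (hasDerivAt_SW hx)
  have hev : (fun y => Real.log (doubleGamma y)) =ᶠ[𝓝 x]
      (fun y => (y - 1) / 2 * Real.log (2 * π)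
        + (-(y - 1) * y / 2 - γ * (y - 1) ^ 2 / 2) + ∑' n, fW n y) := by
    filter_upwards [isOpen_Ioi.mem_nhds (Set.mem_Ioi.mpr hx)] with y hy
    exact log_doubleGamma_eq hy
  have hfinal := htot.congr_of_eventuallyEq hev
  refine hfinal.congr_deriv ?_
  have hdg : digamma x = -γ + TAux x := by
    rw [digamma]; exact digamma_series hx
  rw [hdg]
  push_cast
  ring

end MainDoubleGamma

theorem hasDerivAt_log_doubleGamma (x : ℝ) (hx : 0 < x) :
    HasDerivAt (fun y => Real.log (doubleGamma y))
      ((x - 1) * (digamma x - 1) + (Real.log (2 * π) - 1) / 2) x ∧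
    deriv (fun y => Real.log (doubleGamma y)) 1 = (Real.log (2 * π) - 1) / 2 := by
  refine ⟨main_hasDerivAt hx, ?_⟩
  have h := (main_hasDerivAt one_pos).deriv
  rw [h]
  norm_num
end

section
/- Series representation of the logarithmic derivative: for every real x > 0, φ(1+x) = −1/2 + (1/2)·ln(2π) − x(1+γ) + ∑_{k=1}^∞ x²/(k(x+k)), where φ(y) denotes the derivative of ln G at y and γ is the Euler–Mascheroni constant. -/
open Real

/-- The factors of the Weierstrass product. -/
noncomputable def dgTerm (n : ℕ) (x : ℝ) : ℝ :=
  (1 + (x - 1) / (n + 1)) ^ (n + 1) * Real.exp (-(x - 1) + (x - 1) ^ 2 / (2 * (n + 1)))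

/-- The logarithm of a factor. -/
noncomputable def dgLog (n : ℕ) (y : ℝ) : ℝ :=
  ((n : ℝ) + 1) * Real.log (1 + (y - 1) / (n + 1)) +
    (-(y - 1) + (y - 1) ^ 2 / (2 * ((n : ℝ) + 1)))

/-- The derivative of `dgLog n`. -/
noncomputable def dgLog' (n : ℕ) (y : ℝ) : ℝ :=
  (y - 1) ^ 2 / (((n : ℝ) + 1) * ((n : ℝ) + y))

lemma dg_base_pos_s12 {n : ℕ} {y : ℝ} (hy : 0 < y) : 0 < 1 + (y - 1) / ((n : ℝ) + 1) := by
  have hn : (0 : ℝ) < (n : ℝ) + 1 := by positivity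
  have : 1 + (y - 1) / ((n : ℝ) + 1) = ((n : ℝ) + y) / ((n : ℝ) + 1) := by
    field_simp
    ring
  rw [this]
  have : (0 : ℝ) < (n : ℝ) + y := by positivity
  positivity

lemma dgTerm_pos {n : ℕ} {y : ℝ} (hy : 0 < y) : 0 < dgTerm n y := by
  unfold dgTerm
  have := dg_base_pos_s12 (n := n) hy
  positivity

lemma log_dgTerm {n : ℕ} {y : ℝ} (hy : 0 < y) : Real.log (dgTerm n y) = dgLog n y := by
  unfold dgTerm dgLog
  have hb := dg_base_pos_s12 (n := n) hy
  rw [Real.log_mul (by positivity) (Real.exp_pos _).ne', Real.log_pow, Real.log_exp]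
  push_cast
  ring

lemma dgLog_hasDerivAt {n : ℕ} {y : ℝ} (hy : 0 < y) :
    HasDerivAt (dgLog n) (dgLog' n y) y := by
  have hn : (0 : ℝ) < (n : ℝ) + 1 := by positivity
  have hb := dg_base_pos_s12 (n := n) hy
  have h1 : HasDerivAt (fun z : ℝ => 1 + (z - 1) / ((n : ℝ) + 1)) (1 / ((n : ℝ) + 1)) y := by
    simpa using (((hasDerivAt_id y).sub_const 1).div_const ((n : ℝ) + 1)).const_add 1
  have h2 := (h1.log hb.ne').const_mul ((n : ℝ) + 1)
  have h3 : HasDerivAt (fun z : ℝ => -(z - 1) + (z - 1) ^ 2 / (2 * ((n : ℝ) + 1)))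
      (-1 + 2 * (y - 1) / (2 * ((n : ℝ) + 1))) y := by
    have := ((hasDerivAt_id y).sub_const 1).neg.add
      ((((hasDerivAt_id y).sub_const 1).pow 2).div_const (2 * ((n : ℝ) + 1)))
    refine this.congr_deriv ?_
    norm_num
  have h4 := h2.add h3
  refine h4.congr_deriv ?_
  unfold dgLog'
  have hny : (0 : ℝ) < (n : ℝ) + y := by positivity
  have hbne : (1 : ℝ) + (y - 1) / ((n : ℝ) + 1) = ((n : ℝ) + y) / ((n : ℝ) + 1) := by
    field_simp
    ring
  rw [hbne]
  field_simp
  ring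

lemma dgLog_one (n : ℕ) : dgLog n 1 = 0 := by
  simp [dgLog]

lemma summable_u (x : ℝ) : Summable (fun n : ℕ => 2 * (x + 1) ^ 2 / ((n : ℝ) + 1) ^ 2) := by
  have h : Summable (fun n : ℕ => 1 / ((n : ℝ) + 1) ^ 2) := by
    have := (summable_nat_add_iff (f := fun n : ℕ => 1 / (n : ℝ) ^ 2) 1).mpr
      (Real.summable_one_div_nat_pow.mpr one_lt_two)
    simpa using this
  have := h.mul_left (2 * (x + 1) ^ 2)
  simpa [div_eq_mul_inv, mul_assoc] using this

lemma dgLog'_bound {x : ℝ} (hx : 0 < x) {n : ℕ} {y : ℝ}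
    (hy : y ∈ Set.Ioo (1 / 2 : ℝ) (x + 2)) :
    ‖dgLog' n y‖ ≤ 2 * (x + 1) ^ 2 / ((n : ℝ) + 1) ^ 2 := by
  obtain ⟨hy1, hy2⟩ := hy
  have hn : (0 : ℝ) < (n : ℝ) + 1 := by positivity
  have hny : (0 : ℝ) < (n : ℝ) + y := by positivity
  have hd : dgLog' n y = (y - 1) ^ 2 / (((n : ℝ) + 1) * ((n : ℝ) + y)) := rfl
  rw [Real.norm_eq_abs, hd, abs_of_nonneg (by positivity)]
  have hnum : (y - 1) ^ 2 ≤ (x + 1) ^ 2 := by nlinarith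
  have hden : ((n : ℝ) + 1) ^ 2 / 2 ≤ ((n : ℝ) + 1) * ((n : ℝ) + y) := by nlinarith
  calc (y - 1) ^ 2 / (((n : ℝ) + 1) * ((n : ℝ) + y))
      ≤ (x + 1) ^ 2 / (((n : ℝ) + 1) ^ 2 / 2) := by
        exact div_le_div₀ (by positivity) hnum (by positivity) hden
    _ = 2 * (x + 1) ^ 2 / ((n : ℝ) + 1) ^ 2 := by field_simp

theorem deriv_log_doubleGamma_series (x : ℝ) (hx : 0 < x) :
    deriv (fun y => Real.log (doubleGamma y)) (1 + x) =
      -1 / 2 + 1 / 2 * Real.log (2 * π) - x * (1 + Real.eulerMascheroniConstant) +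
        ∑' k : ℕ, x ^ 2 / (((k : ℝ) + 1) * (x + ((k : ℝ) + 1))) := by
  set t : Set ℝ := Set.Ioo (1 / 2 : ℝ) (x + 2) with ht
  have hto : IsOpen t := isOpen_Ioo
  have htc : IsPreconnected t := isPreconnected_Ioo
  have h1t : (1 : ℝ) ∈ t := ⟨by norm_num, by linarith⟩
  have hxt : (1 + x) ∈ t := ⟨by linarith, by linarith⟩
  have htpos : ∀ y ∈ t, (0 : ℝ) < y := fun y hy => lt_trans (by norm_num) hy.1
  have hu := summable_u x
  have hder : ∀ (n : ℕ), ∀ y ∈ t, HasDerivAt (dgLog n) (dgLog' n y) y :=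
    fun n y hy => dgLog_hasDerivAt (htpos y hy)
  have hbd : ∀ (n : ℕ), ∀ y ∈ t, ‖dgLog' n y‖ ≤ 2 * (x + 1) ^ 2 / ((n : ℝ) + 1) ^ 2 :=
    fun n y hy => dgLog'_bound hx hy
  have h0 : Summable (fun n : ℕ => dgLog n 1) := by
    have : (fun n : ℕ => dgLog n 1) = fun _ : ℕ => (0 : ℝ) := funext fun n => dgLog_one n
    rw [this]; exact summable_zero
  have hsum : ∀ y ∈ t, Summable (fun n : ℕ => dgLog n y) := fun y hy =>
    summable_of_summable_hasDerivAt_of_isPreconnected hu hto htc hder hbd h1t h0 hy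
  -- the logarithm of the double gamma function on `t`
  have hlog : ∀ y ∈ t, Real.log (doubleGamma y) =
      (y - 1) / 2 * Real.log (2 * π) +
        (-(y - 1) * y / 2 - Real.eulerMascheroniConstant * (y - 1) ^ 2 / 2) +
        ∑' n : ℕ, dgLog n y := by
    intro y hy
    have hypos := htpos y hy
    have hprod : (∏' n : ℕ, dgTerm n y) = Real.exp (∑' n : ℕ, dgLog n y) := by
      have h := (hsum y hy).hasSum.rexp
      have hfun : (rexp ∘ fun n : ℕ => dgLog n y) = fun n : ℕ => dgTerm n y :=
        funext fun n => by
          simp only [Function.comp]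
          rw [← log_dgTerm hypos, Real.exp_log (dgTerm_pos hypos)]
      rw [hfun] at h
      exact h.tprod_eq
    have hdg : doubleGamma y =
        (2 * π) ^ ((y - 1) / 2) *
          Real.exp (-(y - 1) * y / 2 - Real.eulerMascheroniConstant * (y - 1) ^ 2 / 2) *
          ∏' n : ℕ, dgTerm n y := rfl
    have h2pi : (0 : ℝ) < 2 * π := by positivity
    rw [hdg, hprod, Real.log_mul (by positivity) (Real.exp_pos _).ne',
      Real.log_mul (by positivity) (Real.exp_pos _).ne', Real.log_rpow h2pi,
      Real.log_exp, Real.log_exp]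
  -- the series of derivatives
  have hDeriv : HasDerivAt (fun y : ℝ => ∑' n : ℕ, dgLog n y)
      (∑' n : ℕ, dgLog' n (1 + x)) (1 + x) :=
    hasDerivAt_tsum_of_isPreconnected hu hto htc hder hbd h1t h0 hxt
  -- derivative of the elementary part
  have hElem : HasDerivAt (fun y : ℝ => (y - 1) / 2 * Real.log (2 * π) +
      (-(y - 1) * y / 2 - Real.eulerMascheroniConstant * (y - 1) ^ 2 / 2))
      (1 / 2 * Real.log (2 * π) +
        (-(1 + x - 1 + (1 + x)) / 2 - Real.eulerMascheroniConstant * (1 + x - 1))) (1 + x) := by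
    have h1 : HasDerivAt (fun y : ℝ => (y - 1) / 2 * Real.log (2 * π))
        (1 / 2 * Real.log (2 * π)) (1 + x) := by
      simpa using (((hasDerivAt_id (1 + x)).sub_const 1).div_const 2).mul_const
        (Real.log (2 * π))
    have h2 : HasDerivAt (fun y : ℝ => -(y - 1) * y / 2)
        ((-1 * (1 + x) + -(1 + x - 1) * 1) / 2) (1 + x) :=
      (((hasDerivAt_id (1 + x)).sub_const 1).neg.mul (hasDerivAt_id (1 + x))).div_const 2
    have h3 : HasDerivAt (fun y : ℝ => Real.eulerMascheroniConstant * (y - 1) ^ 2 / 2)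
        (Real.eulerMascheroniConstant * (2 * (1 + x - 1)) / 2) (1 + x) := by
      have := ((((hasDerivAt_id (1 + x)).sub_const 1).pow 2).const_mul
        Real.eulerMascheroniConstant).div_const 2
      simpa using this
    have := h1.add (h2.sub h3)
    refine this.congr_deriv ?_
    ring
  have hG : HasDerivAt (fun y : ℝ => (y - 1) / 2 * Real.log (2 * π) +
      (-(y - 1) * y / 2 - Real.eulerMascheroniConstant * (y - 1) ^ 2 / 2) +
      ∑' n : ℕ, dgLog n y)
      (1 / 2 * Real.log (2 * π) +
        (-(1 + x - 1 + (1 + x)) / 2 - Real.eulerMascheroniConstant * (1 + x - 1)) +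
        ∑' n : ℕ, dgLog' n (1 + x)) (1 + x) := hElem.add hDeriv
  have heq : (fun y => Real.log (doubleGamma y)) =ᶠ[nhds (1 + x)]
      (fun y : ℝ => (y - 1) / 2 * Real.log (2 * π) +
        (-(y - 1) * y / 2 - Real.eulerMascheroniConstant * (y - 1) ^ 2 / 2) +
        ∑' n : ℕ, dgLog n y) := by
    filter_upwards [hto.mem_nhds hxt] with y hy using hlog y hy
  rw [heq.deriv_eq, hG.deriv]
  have hts : (∑' n : ℕ, dgLog' n (1 + x)) =
      ∑' k : ℕ, x ^ 2 / (((k : ℝ) + 1) * (x + ((k : ℝ) + 1))) := by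
    refine tsum_congr fun k => ?_
    unfold dgLog'
    ring_nf
  rw [hts]
  ring
end
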